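/- arXiv:1407.1712 — 4 statements merged into one kernel-verified Lean document; each statement's English description precedes it below -/
import Mathlib

section
/- Let d ≥ 2 and let u : ℤ^d → ℂ^d be a divergence-free Fourier coefficient sequence with u_0 = 0, finite energy E(u) and finite enstrophy V(u). Then for every k ∈ ℤ^d \ {0}, the series defining N_k(u) converges absolutely and |N_k(u)| ≤ √(E(u)) · √(V(u)). -/
noncomputable section

open scoped BigOperators

/-- Euclidean norm of an integer vector `k ∈ ℤ^d ⊂ ℝ^d`. -/
def znorm {d : ℕ} (k : Fin d → ℤ) : ℝ := Real.sqrt (∑ i, ((k i : ℝ))^2)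

/-- The bilinear pairing `(a·k) = Σ_j a_j k_j` of a complex vector with an integer vector. -/
def dotZ {d : ℕ} (a : EuclideanSpace ℂ (Fin d)) (k : Fin d → ℤ) : ℂ := ∑ j, a j * (k j : ℂ)

/-- Orthogonal projection `Π_k` onto the orthogonal complement of the (real) vector `k`. -/
def projP {d : ℕ} (k : Fin d → ℤ) (v : EuclideanSpace ℂ (Fin d)) : EuclideanSpace ℂ (Fin d) :=
  WithLp.toLp 2 (fun j => v j - (dotZ v k / ((∑ i, ((k i : ℝ))^2 : ℝ) : ℂ)) * (k j : ℂ))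

/-- The `k1`-th term of the Navier–Stokes nonlinearity
`N_k(u) = -i Σ_{k1 ≠ 0} (u_{k1}·k) Π_k u_{k-k1}`. -/
def Nterm {d : ℕ} (u : (Fin d → ℤ) → EuclideanSpace ℂ (Fin d)) (k k1 : Fin d → ℤ) :
    EuclideanSpace ℂ (Fin d) :=
  if k1 = 0 then 0 else (-Complex.I * dotZ (u k1) k) • projP k (u (k - k1))

/-- The Navier–Stokes nonlinearity `N_k(u)`. -/
def Nfun {d : ℕ} (u : (Fin d → ℤ) → EuclideanSpace ℂ (Fin d)) (k : Fin d → ℤ) :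
    EuclideanSpace ℂ (Fin d) := ∑' k1, Nterm u k k1

/-- Energy `E(u) = Σ_k |u_k|²`. -/
def energy {d : ℕ} (u : (Fin d → ℤ) → EuclideanSpace ℂ (Fin d)) : ℝ := ∑' k, ‖u k‖^2

/-- Enstrophy `V(u) = Σ_k |k|²|u_k|²`. -/
def enstrophy {d : ℕ} (u : (Fin d → ℤ) → EuclideanSpace ℂ (Fin d)) : ℝ :=
  ∑' k, (znorm k)^2 * ‖u k‖^2

/-- Divergence-free: `(u_k · k) = 0` for all `k`. -/
def divFree {d : ℕ} (u : (Fin d → ℤ) → EuclideanSpace ℂ (Fin d)) : Prop :=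
  ∀ k, dotZ (u k) k = 0

/-- Reality condition: `u_{-k} = conj (u_k)`. -/
def realSeq {d : ℕ} (u : (Fin d → ℤ) → EuclideanSpace ℂ (Fin d)) : Prop :=
  ∀ k j, u (-k) j = starRingEnd ℂ (u k j)

/-- RHS of the Galerkin-projected Navier–Stokes system in the Fourier domain.
(For `u` supported on modes `0 < |k| ≤ n`, the `tsum` below reduces to the finite sum
over `k1 ≠ 0`, `|k1| ≤ n`, `0 < |k-k1| ≤ n`.) -/
def GalerkinRHS {d : ℕ} (ν : ℝ) (fk : EuclideanSpace ℂ (Fin d))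
    (u : (Fin d → ℤ) → EuclideanSpace ℂ (Fin d)) (k : Fin d → ℤ) :
    EuclideanSpace ℂ (Fin d) :=
  (∑' k1, Nterm u k k1) - ((ν * (znorm k)^2 : ℝ) : ℂ) • u k + projP k fk

/-- `u : ℝ → (ℤ^d → ℂ^d)` is a solution of the symmetric Galerkin projection of order `n`
of the Navier–Stokes Fourier system with viscosity `ν` and forcing `f`. -/
def IsGalerkinSol {d : ℕ} (ν n : ℝ) (f : ℝ → (Fin d → ℤ) → EuclideanSpace ℂ (Fin d))
    (u : ℝ → (Fin d → ℤ) → EuclideanSpace ℂ (Fin d)) : Prop :=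
  (∀ t, u t 0 = 0) ∧
  (∀ t k, n < znorm k → u t k = 0) ∧
  (∀ t (k : Fin d → ℤ), k ≠ 0 → znorm k ≤ n →
    HasDerivAt (fun s => u s k) (GalerkinRHS ν (f t k) (u t) k) t)

/-- auxiliary: the complexified integer vector. -/
def kvecC {d : ℕ} (k : Fin d → ℤ) : EuclideanSpace ℂ (Fin d) := WithLp.toLp 2 (fun j => (k j : ℂ))

lemma dotZ_eq_inner {d : ℕ} (k : Fin d → ℤ) (a : EuclideanSpace ℂ (Fin d)) :
    dotZ a k = inner ℂ (kvecC k) a := by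
  simp [dotZ, kvecC, PiLp.inner_apply, mul_comm]

lemma norm_kvecC {d : ℕ} (k : Fin d → ℤ) : ‖kvecC k‖ = znorm k := by
  simp [EuclideanSpace.norm_eq, kvecC, znorm, Complex.norm_intCast]

lemma norm_dotZ_le {d : ℕ} (k : Fin d → ℤ) (a : EuclideanSpace ℂ (Fin d)) :
    ‖dotZ a k‖ ≤ ‖a‖ * znorm k := by
  rw [dotZ_eq_inner, mul_comm, ← norm_kvecC k]
  exact norm_inner_le_norm _ _

lemma dotZ_sub {d : ℕ} (a : EuclideanSpace ℂ (Fin d)) (k k1 : Fin d → ℤ) :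
    dotZ a (k - k1) = dotZ a k - dotZ a k1 := by
  simp [dotZ, mul_sub, Finset.sum_sub_distrib, Pi.sub_apply]

lemma projP_norm_le {d : ℕ} (k : Fin d → ℤ) (hk : k ≠ 0) (v : EuclideanSpace ℂ (Fin d)) :
    ‖projP k v‖ ≤ ‖v‖ := by
  set S : ℝ := ∑ i, ((k i : ℝ))^2 with hS
  have hSpos : 0 < S := by
    have : ∃ i, k i ≠ 0 := by
      by_contra h
      push_neg at h
      exact hk (funext fun i => h i)
    obtain ⟨i, hi⟩ := this
    apply Finset.sum_pos' (fun j _ => sq_nonneg _) ⟨i, Finset.mem_univ i, ?_⟩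
    have : (k i : ℝ) ≠ 0 := Int.cast_ne_zero.mpr hi
    positivity
  set t : ℂ := dotZ v k with ht
  have hproj : projP k v = v - (t / (S : ℂ)) • kvecC k := by
    ext j
    simp [projP, kvecC, ht, hS]
  have hkn : ‖kvecC k‖ ^ 2 = S := by
    rw [norm_kvecC, znorm, Real.sq_sqrt (Finset.sum_nonneg fun i _ => sq_nonneg _)]
  have hinner : inner ℂ v ((t / (S : ℂ)) • kvecC k) = ((‖t‖^2 / S : ℝ) : ℂ) := by
    rw [inner_smul_right]
    have h1 : (inner ℂ v (kvecC k) : ℂ) = starRingEnd ℂ t := by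
      rw [ht, dotZ_eq_inner, ← inner_conj_symm]
    rw [h1]
    rw [div_mul_eq_mul_div, Complex.mul_conj]
    rw [Complex.normSq_eq_norm_sq]
    push_cast
    ring
  have hsq : ‖projP k v‖^2 = ‖v‖^2 - ‖t‖^2 / S := by
    rw [hproj, @norm_sub_sq ℂ]
    have h2 : ‖(t / (S : ℂ)) • kvecC k‖^2 = ‖t‖^2 / S := by
      rw [norm_smul, mul_pow, hkn, norm_div]
      have : ‖(S : ℂ)‖ = S := by
        rw [Complex.norm_real, Real.norm_of_nonneg hSpos.le]
      rw [this, div_pow]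
      field_simp
    rw [hinner, h2]
    have hre : RCLike.re ((‖t‖ ^ 2 / S : ℝ) : ℂ) = ‖t‖ ^ 2 / S := by
      simp [Complex.ofReal_re]
      norm_cast
    rw [hre]
    ring
  have h3 : ‖projP k v‖^2 ≤ ‖v‖^2 := by
    rw [hsq]
    have : 0 ≤ ‖t‖^2 / S := by positivity
    linarith
  have := Real.sqrt_le_sqrt h3
  rwa [Real.sqrt_sq (norm_nonneg _), Real.sqrt_sq (norm_nonneg _)] at this

lemma tsum_cs {ι : Type*} (a b : ι → ℝ) (ha : ∀ i, 0 ≤ a i) (hb : ∀ i, 0 ≤ b i)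
    (ha2 : Summable fun i => a i ^ 2) (hb2 : Summable fun i => b i ^ 2) :
    Summable (fun i => a i * b i) ∧
      ∑' i, a i * b i ≤ Real.sqrt (∑' i, a i ^ 2) * Real.sqrt (∑' i, b i ^ 2) := by
  have hsum : Summable (fun i => a i * b i) := by
    apply Summable.of_nonneg_of_le (fun i => mul_nonneg (ha i) (hb i))
      (fun i => ?_) ((ha2.add hb2).div_const 2)
    have := sq_nonneg (a i - b i)
    show a i * b i ≤ (a i ^ 2 + b i ^ 2) / 2
    nlinarith
  refine ⟨hsum, ?_⟩
  have hA : 0 ≤ ∑' i, a i ^ 2 := tsum_nonneg fun i => sq_nonneg _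
  have hB : 0 ≤ ∑' i, b i ^ 2 := tsum_nonneg fun i => sq_nonneg _
  apply Summable.tsum_le_of_sum_le hsum
  intro s
  have h1 : (∑ i ∈ s, a i * b i) ^ 2 ≤ (∑ i ∈ s, a i ^ 2) * ∑ i ∈ s, b i ^ 2 :=
    Finset.sum_mul_sq_le_sq_mul_sq s a b
  have h2 : (∑ i ∈ s, a i ^ 2) ≤ ∑' i, a i ^ 2 :=
    Summable.sum_le_tsum s (fun i _ => sq_nonneg _) ha2
  have h3 : (∑ i ∈ s, b i ^ 2) ≤ ∑' i, b i ^ 2 :=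
    Summable.sum_le_tsum s (fun i _ => sq_nonneg _) hb2
  have h4 : (∑ i ∈ s, a i * b i) ^ 2 ≤ (∑' i, a i ^ 2) * ∑' i, b i ^ 2 := by
    calc (∑ i ∈ s, a i * b i) ^ 2 ≤ (∑ i ∈ s, a i ^ 2) * ∑ i ∈ s, b i ^ 2 := h1
      _ ≤ (∑' i, a i ^ 2) * ∑' i, b i ^ 2 :=
        mul_le_mul h2 h3 (Finset.sum_nonneg fun i _ => sq_nonneg _) hA
  have hpos : 0 ≤ ∑ i ∈ s, a i * b i :=
    Finset.sum_nonneg fun i _ => mul_nonneg (ha i) (hb i)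
  rw [← Real.sqrt_mul hA]
  exact (Real.le_sqrt hpos (mul_nonneg hA hB)).mpr h4

/-- For `d ≥ 2` and a divergence-free `u : ℤ^d → ℂ^d` with `u_0 = 0`, finite energy and
finite enstrophy, the series defining `N_k(u)` converges absolutely and
`|N_k(u)| ≤ √(E(u)) √(V(u))` for every `k ≠ 0`. -/
theorem nonlinearity_le_sqrt_energy_mul_sqrt_enstrophy (d : ℕ) (hd : 2 ≤ d)
    (u : (Fin d → ℤ) → EuclideanSpace ℂ (Fin d))
    (hdiv : divFree u) (h0 : u 0 = 0)
    (hE : Summable fun k : Fin d → ℤ => ‖u k‖^2)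
    (hV : Summable fun k : Fin d → ℤ => (znorm k)^2 * ‖u k‖^2) :
    ∀ k : Fin d → ℤ, k ≠ 0 →
      Summable (fun k1 => ‖Nterm u k k1‖) ∧
      ‖Nfun u k‖ ≤ Real.sqrt (energy u) * Real.sqrt (enstrophy u) := by
  intro k hk
  set a : (Fin d → ℤ) → ℝ := fun k1 => ‖u k1‖ with haa
  set b : (Fin d → ℤ) → ℝ := fun k1 => znorm (k - k1) * ‖u (k - k1)‖ with hbb
  have ha : ∀ i, 0 ≤ a i := fun i => norm_nonneg _
  have hb : ∀ i, 0 ≤ b i := fun i => mul_nonneg (Real.sqrt_nonneg _) (norm_nonneg _)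
  have ha2 : Summable fun i => a i ^ 2 := hE
  have hb2 : Summable fun i => b i ^ 2 := by
    have : (fun i => b i ^ 2) =
        (fun m : Fin d → ℤ => (znorm m)^2 * ‖u m‖^2) ∘ (Equiv.subLeft k) := by
      funext i
      simp [hbb, Equiv.subLeft, mul_pow]
    rw [this]
    exact (Equiv.subLeft k).summable_iff.mpr hV
  have hb2sum : ∑' i, b i ^ 2 = enstrophy u := by
    have : (fun i => b i ^ 2) =
        (fun m : Fin d → ℤ => (znorm m)^2 * ‖u m‖^2) ∘ (Equiv.subLeft k) := by
      funext i
      simp [hbb, Equiv.subLeft, mul_pow]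
    rw [this]
    exact Equiv.tsum_eq (Equiv.subLeft k) fun m => (znorm m)^2 * ‖u m‖^2
  have hterm : ∀ k1, ‖Nterm u k k1‖ ≤ a k1 * b k1 := by
    intro k1
    by_cases h1 : k1 = 0
    · subst h1
      rw [show Nterm u k 0 = 0 from if_pos rfl, norm_zero]
      exact mul_nonneg (ha _) (hb _)
    · rw [Nterm, if_neg h1, norm_smul]
      have hdot : dotZ (u k1) k = dotZ (u k1) (k - k1) := by
        rw [dotZ_sub, hdiv k1, sub_zero]
      have h2 : ‖-Complex.I * dotZ (u k1) k‖ = ‖dotZ (u k1) (k - k1)‖ := by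
        rw [norm_mul, hdot]
        simp
      rw [h2]
      calc ‖dotZ (u k1) (k - k1)‖ * ‖projP k (u (k - k1))‖
          ≤ (‖u k1‖ * znorm (k - k1)) * ‖u (k - k1)‖ :=
            mul_le_mul (norm_dotZ_le _ _) (projP_norm_le k hk _) (norm_nonneg _)
              (mul_nonneg (norm_nonneg _) (Real.sqrt_nonneg _))
        _ = a k1 * b k1 := by rw [haa, hbb]; ring
  obtain ⟨hsum, hcs⟩ := tsum_cs a b ha hb ha2 hb2
  have hNsum : Summable (fun k1 => ‖Nterm u k k1‖) :=
    Summable.of_nonneg_of_le (fun _ => norm_nonneg _) hterm hsum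
  refine ⟨hNsum, ?_⟩
  calc ‖Nfun u k‖ ≤ ∑' k1, ‖Nterm u k k1‖ := norm_tsum_le_tsum_norm hNsum
    _ ≤ ∑' k1, a k1 * b k1 := Summable.tsum_le_tsum hterm hNsum hsum
    _ ≤ Real.sqrt (∑' i, a i ^ 2) * Real.sqrt (∑' i, b i ^ 2) := hcs
    _ = Real.sqrt (energy u) * Real.sqrt (enstrophy u) := by rw [hb2sum]; rfl
end
end

section
/- Let d = 2, ν > 0, n ≥ 1, and let f_k : ℝ → ℂ² (defined for 0 < |k| ≤ n) be a continuous forcing. Let u be a solution of the symmetric Galerkin projection of order n of the Navier–Stokes Fourier system with forcing f, which is real and divergence-free. Then for every t, the enstrophy V(u(t)) = Σ_{0<|k|≤n} |k|²|u_k(t)|² satisfies d/dt V(u(t)) ≤ −2ν V(u(t)) + 2 √(V(f(t))) √(V(u(t))), where V(f(t)) = Σ_{0<|k|≤n} |k|²|f_k(t)|². -/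
noncomputable section

open scoped BigOperators

namespace NSAux

/-- squared euclidean norm as a sum -/
def qsum (k : Fin 2 → ℤ) : ℝ := ∑ i, ((k i : ℝ))^2

lemma znorm_sq (k : Fin 2 → ℤ) : znorm k ^ 2 = qsum k := by
  rw [znorm, qsum, Real.sq_sqrt]
  positivity

lemma qsum_eq (k : Fin 2 → ℤ) : qsum k = (k 0 : ℝ)^2 + (k 1 : ℝ)^2 := by
  rw [qsum, Fin.sum_univ_two]

lemma znorm_nonneg (k : Fin 2 → ℤ) : 0 ≤ znorm k := Real.sqrt_nonneg _

lemma one_le_qsum {k : Fin 2 → ℤ} (hk : k ≠ 0) : 1 ≤ qsum k := by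
  have : ∃ i, k i ≠ 0 := by
    by_contra h
    push_neg at h
    exact hk (funext fun i => h i)
  obtain ⟨i, hi⟩ := this
  have h1 : (1:ℤ) ≤ (k i)^2 := by rcases hi.lt_or_gt with h | h <;> nlinarith
  have h1' : (1:ℝ) ≤ (k i : ℝ)^2 := by exact_mod_cast (by push_cast; exact_mod_cast h1 : (1:ℝ) ≤ ((k i)^2 : ℤ))
  rw [qsum_eq]
  have hcase : i = 0 ∨ i = 1 := by omega
  rcases hcase with rfl | rfl <;> nlinarith [sq_nonneg ((k 0 : ℝ)), sq_nonneg ((k 1 : ℝ))]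

lemma qsum_pos {k : Fin 2 → ℤ} (hk : k ≠ 0) : 0 < qsum k := lt_of_lt_of_le one_pos (one_le_qsum hk)

lemma qsumC_ne {k : Fin 2 → ℤ} (hk : k ≠ 0) : ((qsum k : ℝ) : ℂ) ≠ 0 := by
  simp only [ne_eq, Complex.ofReal_eq_zero]
  exact ne_of_gt (qsum_pos hk)

/-- the finite set of admissible modes -/
def Sset (n : ℝ) : Finset (Fin 2 → ℤ) :=
  (Fintype.piFinset fun _ => Finset.Icc (-⌈n⌉) ⌈n⌉).filter fun k => k ≠ 0 ∧ znorm k ≤ n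

lemma mem_Sset {n : ℝ} {k : Fin 2 → ℤ} : k ∈ Sset n ↔ k ≠ 0 ∧ znorm k ≤ n := by
  constructor
  · intro h
    exact (Finset.mem_filter.mp h).2
  · rintro ⟨hk0, hkn⟩
    refine Finset.mem_filter.mpr ⟨Fintype.mem_piFinset.mpr fun i => ?_, hk0, hkn⟩
    have hq : qsum k ≤ n ^ 2 := by
      rw [← znorm_sq]
      have h0 := znorm_nonneg k
      nlinarith
    have hki : (k i : ℝ)^2 ≤ n^2 := by
      rw [qsum_eq] at hq
      have hcase : i = 0 ∨ i = 1 := by omega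
      rcases hcase with rfl | rfl <;> nlinarith [sq_nonneg ((k 0 : ℝ)), sq_nonneg ((k 1 : ℝ))]
    have hn0 : (0:ℝ) ≤ n := le_trans (znorm_nonneg k) hkn
    have h1 : (k i : ℝ) ≤ n := by nlinarith [sq_nonneg ((k i : ℝ) - n), sq_nonneg ((k i : ℝ) + n)]
    have h2 : -n ≤ (k i : ℝ) := by nlinarith [sq_nonneg ((k i : ℝ) - n), sq_nonneg ((k i : ℝ) + n)]
    rw [Finset.mem_Icc]
    constructor
    · have : (-(⌈n⌉:ℤ) : ℝ) ≤ (k i : ℝ) := by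
        push_cast
        linarith [Int.le_ceil n]
      exact_mod_cast this
    · have : (k i : ℝ) ≤ ((⌈n⌉:ℤ) : ℝ) := le_trans h1 (Int.le_ceil n)
      exact_mod_cast this

lemma znorm_neg (k : Fin 2 → ℤ) : znorm (-k) = znorm k := by
  unfold znorm
  congr 1
  apply Finset.sum_congr rfl
  intro i _
  simp [Pi.neg_apply]

lemma Sset_neg {n : ℝ} {k : Fin 2 → ℤ} : -k ∈ Sset n ↔ k ∈ Sset n := by
  simp [mem_Sset, znorm_neg, neg_eq_zero]

end NSAux
namespace NSAux

/-- scalar vorticity -/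
def om (v : (Fin 2 → ℤ) → EuclideanSpace ℂ (Fin 2)) (k : Fin 2 → ℤ) : ℂ :=
  (k 0 : ℂ) * v k 1 - (k 1 : ℂ) * v k 0

lemma qsumC_eq (k : Fin 2 → ℤ) : ((qsum k : ℝ) : ℂ) = (k 0 : ℂ)^2 + (k 1 : ℂ)^2 := by
  rw [qsum_eq]
  push_cast
  ring

lemma v_rep (v : (Fin 2 → ℤ) → EuclideanSpace ℂ (Fin 2)) (k : Fin 2 → ℤ) (hk : k ≠ 0)
    (hd : dotZ (v k) k = 0) :
    v k 0 = -(om v k / ((qsum k : ℝ) : ℂ)) * (k 1 : ℂ) ∧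
    v k 1 = (om v k / ((qsum k : ℝ) : ℂ)) * (k 0 : ℂ) := by
  have hq : ((qsum k : ℝ) : ℂ) ≠ 0 := qsumC_ne hk
  have hd' : v k 0 * (k 0 : ℂ) + v k 1 * (k 1 : ℂ) = 0 := by
    simpa [dotZ, Fin.sum_univ_two] using hd
  have e0 : v k 0 * ((qsum k : ℝ) : ℂ) = -(om v k) * (k 1 : ℂ) := by
    rw [qsumC_eq, om]
    linear_combination (k 0 : ℂ) * hd'
  have e1 : v k 1 * ((qsum k : ℝ) : ℂ) = om v k * (k 0 : ℂ) := by
    rw [qsumC_eq, om]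
    linear_combination (k 1 : ℂ) * hd'
  constructor
  · rw [(eq_div_iff hq).mpr e0]
    ring
  · rw [(eq_div_iff hq).mpr e1]
    ring

lemma proj_inner (k : Fin 2 → ℤ) (x y : EuclideanSpace ℂ (Fin 2)) (hy : dotZ y k = 0) :
    (inner ℂ (projP k x) y : ℂ) = inner ℂ x y := by
  simp only [PiLp.inner_apply, RCLike.inner_apply', projP, PiLp.toLp_apply]
  have hterm : ∀ i : Fin 2,
      (starRingEnd ℂ) (x i - dotZ x k / ((∑ i, ((k i:ℝ))^2 : ℝ) : ℂ) * (k i : ℂ)) * y i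
        = (starRingEnd ℂ) (x i) * y i
          - (starRingEnd ℂ) (dotZ x k / ((∑ i, ((k i:ℝ))^2 : ℝ) : ℂ)) * (y i * (k i : ℂ)) := by
    intro i
    rw [map_sub, map_mul]
    rw [map_intCast (starRingEnd ℂ) (k i)]
    ring
  rw [Finset.sum_congr rfl (fun i _ => hterm i), Finset.sum_sub_distrib, ← Finset.mul_sum]
  have : (∑ i, y i * (k i : ℂ)) = dotZ y k := rfl
  rw [this, hy, mul_zero, sub_zero]

lemma dotZ_conj (v : (Fin 2 → ℤ) → EuclideanSpace ℂ (Fin 2)) (hre : realSeq v)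
    (k1 k : Fin 2 → ℤ) : (starRingEnd ℂ) (dotZ (v k1) k) = dotZ (v (-k1)) k := by
  simp only [dotZ, map_sum, map_mul]
  apply Finset.sum_congr rfl
  intro j _
  rw [hre k1 j, map_intCast (starRingEnd ℂ) (k j)]

/-- the symmetrized triple-interaction summand -/
def Gfun (v : (Fin 2 → ℤ) → EuclideanSpace ℂ (Fin 2)) (p : (Fin 2 → ℤ) × (Fin 2 → ℤ)) : ℂ :=
  ((qsum (-p.1 - p.2) : ℝ) : ℂ) * Complex.I * dotZ (v p.1) (-p.1 - p.2)
    * ∑ j, v p.2 j * v (-p.1 - p.2) j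

end NSAux
namespace NSAux

def detC (x z : Fin 2 → ℤ) : ℂ := (x 0 : ℂ) * (z 1 : ℂ) - (x 1 : ℂ) * (z 0 : ℂ)
def dotC (x z : Fin 2 → ℤ) : ℂ := (x 0 : ℂ) * (z 0 : ℂ) + (x 1 : ℂ) * (z 1 : ℂ)

set_option maxHeartbeats 1000000 in
lemma Gfun_closed (v : (Fin 2 → ℤ) → EuclideanSpace ℂ (Fin 2)) (hdv : divFree v)
    (x y z : Fin 2 → ℤ) (hxyz : x + y + z = 0) (hx : x ≠ 0) (hy : y ≠ 0) (hz : z ≠ 0) :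
    Gfun v (x, y) = Complex.I * om v x * om v y * om v z *
        (((qsum z : ℝ) : ℂ) * detC x z * dotC y z)
      / (((qsum x : ℝ) : ℂ) * ((qsum y : ℝ) : ℂ) * ((qsum z : ℝ) : ℂ)) := by
  have hzz : ∀ j, x j + y j + z j = 0 := by
    intro j
    simpa using congrFun hxyz j
  have hxy : -x - y = z := by
    funext j; have := hzz j; simp only [Pi.sub_apply, Pi.neg_apply]; omega
  obtain ⟨hvx0, hvx1⟩ := v_rep v x hx (hdv x)
  obtain ⟨hvy0, hvy1⟩ := v_rep v y hy (hdv y)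
  obtain ⟨hvz0, hvz1⟩ := v_rep v z hz (hdv z)
  have hX : ((qsum x : ℝ) : ℂ) ≠ 0 := qsumC_ne hx
  have hY : ((qsum y : ℝ) : ℂ) ≠ 0 := qsumC_ne hy
  have hZ : ((qsum z : ℝ) : ℂ) ≠ 0 := qsumC_ne hz
  simp only [Gfun, hxy, dotZ, Fin.sum_univ_two, detC, dotC]
  rw [hvx0, hvx1, hvy0, hvy1, hvz0, hvz1]
  field_simp
  ring

set_option maxHeartbeats 2000000 in
lemma six_sum (v : (Fin 2 → ℤ) → EuclideanSpace ℂ (Fin 2)) (hdv : divFree v)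
    (a b c : Fin 2 → ℤ) (hsum : a + b + c = 0) (ha : a ≠ 0) (hb : b ≠ 0) (hc : c ≠ 0) :
    Gfun v (a, b) + Gfun v (b, a) + Gfun v (a, c) + Gfun v (c, a)
      + Gfun v (b, c) + Gfun v (c, b) = 0 := by
  have h2 : b + a + c = 0 := by rw [← hsum]; abel
  have h3 : a + c + b = 0 := by rw [← hsum]; abel
  have h4 : c + a + b = 0 := by rw [← hsum]; abel
  have h5 : b + c + a = 0 := by rw [← hsum]; abel
  have h6 : c + b + a = 0 := by rw [← hsum]; abel
  rw [Gfun_closed v hdv a b c hsum ha hb hc, Gfun_closed v hdv b a c h2 hb ha hc,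
    Gfun_closed v hdv a c b h3 ha hc hb, Gfun_closed v hdv c a b h4 hc ha hb,
    Gfun_closed v hdv b c a h5 hb hc ha, Gfun_closed v hdv c b a h6 hc hb ha]
  have hX : ((qsum a : ℝ) : ℂ) ≠ 0 := qsumC_ne ha
  have hY : ((qsum b : ℝ) : ℂ) ≠ 0 := qsumC_ne hb
  have hZ : ((qsum c : ℝ) : ℂ) ≠ 0 := qsumC_ne hc
  have hzz : ∀ j, a j + b j + c j = 0 := by
    intro j
    simpa using congrFun hsum j
  have hcc0 : (c 0 : ℂ) = -(a 0 : ℂ) - (b 0 : ℂ) := by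
    have h := hzz 0
    have h' : c 0 = -(a 0) - b 0 := by omega
    rw [h']; push_cast; ring
  have hcc1 : (c 1 : ℂ) = -(a 1 : ℂ) - (b 1 : ℂ) := by
    have h := hzz 1
    have h' : c 1 = -(a 1) - b 1 := by omega
    rw [h']; push_cast; ring
  have hN : ((qsum c : ℝ) : ℂ) * (detC a c * dotC b c + detC b c * dotC a c)
        + ((qsum b : ℝ) : ℂ) * (detC a b * dotC c b + detC c b * dotC a b)
        + ((qsum a : ℝ) : ℂ) * (detC b a * dotC c a + detC c a * dotC b a) = 0 := by
    simp only [detC, dotC, qsumC_eq, hcc0, hcc1]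
    ring
  have d2 : ((qsum b : ℝ) : ℂ) * ((qsum a : ℝ) : ℂ) * ((qsum c : ℝ) : ℂ)
      = ((qsum a : ℝ) : ℂ) * ((qsum b : ℝ) : ℂ) * ((qsum c : ℝ) : ℂ) := by ring
  have d3 : ((qsum a : ℝ) : ℂ) * ((qsum c : ℝ) : ℂ) * ((qsum b : ℝ) : ℂ)
      = ((qsum a : ℝ) : ℂ) * ((qsum b : ℝ) : ℂ) * ((qsum c : ℝ) : ℂ) := by ring
  have d4 : ((qsum c : ℝ) : ℂ) * ((qsum a : ℝ) : ℂ) * ((qsum b : ℝ) : ℂ)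
      = ((qsum a : ℝ) : ℂ) * ((qsum b : ℝ) : ℂ) * ((qsum c : ℝ) : ℂ) := by ring
  have d5 : ((qsum b : ℝ) : ℂ) * ((qsum c : ℝ) : ℂ) * ((qsum a : ℝ) : ℂ)
      = ((qsum a : ℝ) : ℂ) * ((qsum b : ℝ) : ℂ) * ((qsum c : ℝ) : ℂ) := by ring
  have d6 : ((qsum c : ℝ) : ℂ) * ((qsum b : ℝ) : ℂ) * ((qsum a : ℝ) : ℂ)
      = ((qsum a : ℝ) : ℂ) * ((qsum b : ℝ) : ℂ) * ((qsum c : ℝ) : ℂ) := by ring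
  rw [d2, d3, d4, d5, d6]
  simp only [← add_div]
  rw [div_eq_zero_iff]
  left
  linear_combination (Complex.I * om v a * om v b * om v c) * hN

end NSAux
namespace NSAux

lemma term_eq (v : (Fin 2 → ℤ) → EuclideanSpace ℂ (Fin 2)) (hre : realSeq v)
    (hdv : divFree v) (k k1 : Fin 2 → ℤ) (hk1 : k1 ≠ 0) :
    ((qsum k : ℝ) : ℂ) * (inner ℂ (Nterm v k k1) (v k) : ℂ) = Gfun v (-k1, k1 - k) := by
  have h1 : (-(-k1) - (k1 - k) : Fin 2 → ℤ) = k := by abel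
  rw [Nterm, if_neg hk1, inner_smul_left]
  rw [proj_inner k (v (k - k1)) (v k) (hdv k)]
  rw [map_mul]
  have hI : (starRingEnd ℂ) (-Complex.I) = Complex.I := by simp
  rw [hI, dotZ_conj v hre k1 k]
  have hinner : (inner ℂ (v (k - k1)) (v k) : ℂ) = ∑ j, v (k1 - k) j * v k j := by
    simp only [PiLp.inner_apply, RCLike.inner_apply']
    apply Finset.sum_congr rfl
    intro j _
    have h := hre (k - k1) j
    rw [neg_sub] at h
    rw [← h]
  rw [hinner]
  simp only [Gfun, h1]
  ring

lemma Gfun_zero {n : ℝ} (v : (Fin 2 → ℤ) → EuclideanSpace ℂ (Fin 2))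
    (hsupp : ∀ k, k ∉ Sset n → v k = 0) (p : (Fin 2 → ℤ) × (Fin 2 → ℤ))
    (h : p.1 ∉ Sset n ∨ p.2 ∉ Sset n ∨ -p.1 - p.2 ∉ Sset n) : Gfun v p = 0 := by
  rcases h with h | h | h
  · simp [Gfun, hsupp _ h, dotZ]
  · simp [Gfun, hsupp _ h, dotZ]
  · simp [Gfun, hsupp _ h, dotZ]

lemma NL_zero (n : ℝ) (v : (Fin 2 → ℤ) → EuclideanSpace ℂ (Fin 2))
    (hsupp : ∀ k, k ∉ Sset n → v k = 0) (hre : realSeq v) (hdv : divFree v) :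
    ∑ k ∈ Sset n, ∑ k1 ∈ Sset n,
      ((qsum k : ℝ) : ℂ) * (inner ℂ (Nterm v k k1) (v k) : ℂ) = 0 := by
  classical
  set S := Sset n with hS
  set ψ : (Fin 2 → ℤ) × (Fin 2 → ℤ) → (Fin 2 → ℤ) × (Fin 2 → ℤ) :=
    fun p => (-p.2, p.2 - p.1) with hψ
  set V : Finset ((Fin 2 → ℤ) × (Fin 2 → ℤ)) :=
    (S ×ˢ S).filter fun p => -p.1 - p.2 ∈ S with hV
  have hmemV : ∀ p : (Fin 2 → ℤ) × (Fin 2 → ℤ),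
      p ∈ V ↔ p.1 ∈ S ∧ p.2 ∈ S ∧ -p.1 - p.2 ∈ S := by
    intro p
    simp only [hV, Finset.mem_filter, Finset.mem_product]
    tauto
  have hGV : ∀ p, p ∉ V → Gfun v p = 0 := by
    intro p hp
    apply Gfun_zero v hsupp
    rw [hmemV] at hp
    tauto
  have hinj : ∀ p ∈ S ×ˢ S, ∀ q ∈ S ×ˢ S, ψ p = ψ q → p = q := by
    intro p _ q _ h
    have h1 : -p.2 = -q.2 := congrArg Prod.fst h
    have e2 : p.2 = q.2 := neg_injective h1
    have h2 : p.2 - p.1 = q.2 - q.1 := congrArg Prod.snd h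
    rw [e2] at h2
    have e1 : p.1 = q.1 := sub_right_injective h2
    exact Prod.ext e1 e2
  have hGimg : ∀ p, p ∉ (S ×ˢ S).image ψ → Gfun v p = 0 := by
    intro p hp
    apply Gfun_zero v hsupp
    by_contra h
    push_neg at h
    obtain ⟨h1, h2, h3⟩ := h
    apply hp
    refine Finset.mem_image.mpr ⟨(-p.1 - p.2, -p.1), ?_, ?_⟩
    · refine Finset.mem_product.mpr ⟨h3, ?_⟩
      show -p.1 ∈ S
      exact Sset_neg.mpr h1
    · apply Prod.ext
      · simp [hψ]
      · simp only [hψ]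
        abel
  -- reduce double sum to sum over V
  have step1 : ∑ k ∈ S, ∑ k1 ∈ S, ((qsum k : ℝ) : ℂ) * (inner ℂ (Nterm v k k1) (v k) : ℂ)
      = ∑ p ∈ S ×ˢ S, Gfun v (ψ p) := by
    rw [Finset.sum_product]
    apply Finset.sum_congr rfl
    intro k hk
    apply Finset.sum_congr rfl
    intro k1 hk1
    have hk1' : k1 ≠ 0 := (mem_Sset.mp (hS ▸ hk1)).1
    simpa [hψ] using term_eq v hre hdv k k1 hk1'
  have step2 : ∑ p ∈ S ×ˢ S, Gfun v (ψ p) = ∑ p ∈ (S ×ˢ S).image ψ, Gfun v p :=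
    (Finset.sum_image hinj).symm
  have step3 : ∑ p ∈ (S ×ˢ S).image ψ, Gfun v p = ∑ p ∈ V, Gfun v p := by
    rw [Finset.sum_subset (Finset.subset_union_left (s₂ := V))
        (fun x _ hx => hGimg x hx),
      Finset.sum_subset (Finset.subset_union_right (s₁ := (S ×ˢ S).image ψ))
        (fun x _ hx => hGV x hx)]
  rw [step1, step2, step3]
  -- symmetrization
  have habel1 : ∀ p : (Fin 2 → ℤ) × (Fin 2 → ℤ), -p.2 - p.1 = -p.1 - p.2 := by
    intro p; abel
  have hb1 : ∀ p : (Fin 2 → ℤ) × (Fin 2 → ℤ), -(-p.1 - p.2) - p.1 = p.2 := by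
    intro p; abel
  have hb2 : ∀ p : (Fin 2 → ℤ) × (Fin 2 → ℤ), -p.1 - (-p.1 - p.2) = p.2 := by
    intro p; abel
  have hb3 : ∀ p : (Fin 2 → ℤ) × (Fin 2 → ℤ), -(-p.1 - p.2) - p.2 = p.1 := by
    intro p; abel
  have hb4 : ∀ p : (Fin 2 → ℤ) × (Fin 2 → ℤ), -p.2 - (-p.1 - p.2) = p.1 := by
    intro p; abel
  -- the five reindexing identities
  have hs1 : ∑ p ∈ V, Gfun v (p.2, p.1) = ∑ p ∈ V, Gfun v p := by
    apply Finset.sum_nbij' (i := fun p => (p.2, p.1)) (j := fun p => (p.2, p.1))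
    · intro p hp
      rw [hmemV] at hp
      rw [hmemV]
      dsimp only
      exact ⟨hp.2.1, hp.1, by rw [habel1]; exact hp.2.2⟩
    · intro p hp
      rw [hmemV] at hp
      rw [hmemV]
      dsimp only
      exact ⟨hp.2.1, hp.1, by rw [habel1]; exact hp.2.2⟩
    · intro p _; rfl
    · intro p _; rfl
    · intro p _; rfl
  have hs2 : ∑ p ∈ V, Gfun v (p.1, -p.1 - p.2) = ∑ p ∈ V, Gfun v p := by
    apply Finset.sum_nbij' (i := fun p => (p.1, -p.1 - p.2)) (j := fun p => (p.1, -p.1 - p.2))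
    · intro p hp
      rw [hmemV] at hp
      rw [hmemV]
      dsimp only
      exact ⟨hp.1, hp.2.2, by rw [hb2]; exact hp.2.1⟩
    · intro p hp
      rw [hmemV] at hp
      rw [hmemV]
      dsimp only
      exact ⟨hp.1, hp.2.2, by rw [hb2]; exact hp.2.1⟩
    · intro p _
      apply Prod.ext
      · rfl
      · simp only []
        abel
    · intro p _
      apply Prod.ext
      · rfl
      · simp only []
        abel
    · intro p _; rfl
  have hs3 : ∑ p ∈ V, Gfun v (-p.1 - p.2, p.2) = ∑ p ∈ V, Gfun v p := by
    apply Finset.sum_nbij' (i := fun p => (-p.1 - p.2, p.2)) (j := fun p => (-p.1 - p.2, p.2))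
    · intro p hp
      rw [hmemV] at hp
      rw [hmemV]
      dsimp only
      exact ⟨hp.2.2, hp.2.1, by rw [hb3]; exact hp.1⟩
    · intro p hp
      rw [hmemV] at hp
      rw [hmemV]
      dsimp only
      exact ⟨hp.2.2, hp.2.1, by rw [hb3]; exact hp.1⟩
    · intro p _
      apply Prod.ext
      · simp only []
        abel
      · rfl
    · intro p _
      apply Prod.ext
      · simp only []
        abel
      · rfl
    · intro p _; rfl
  have hs4 : ∑ p ∈ V, Gfun v (p.2, -p.1 - p.2) = ∑ p ∈ V, Gfun v p := by
    apply Finset.sum_nbij' (i := fun p => (p.2, -p.1 - p.2)) (j := fun p => (-p.1 - p.2, p.1))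
    · intro p hp
      rw [hmemV] at hp
      rw [hmemV]
      dsimp only
      exact ⟨hp.2.1, hp.2.2, by rw [hb4 p]; exact hp.1⟩
    · intro p hp
      rw [hmemV] at hp
      rw [hmemV]
      dsimp only
      exact ⟨hp.2.2, hp.1, by rw [hb1]; exact hp.2.1⟩
    · intro p _
      apply Prod.ext
      · simp only []
        abel
      · rfl
    · intro p _
      apply Prod.ext
      · rfl
      · simp only []
        abel
    · intro p _; rfl
  have hs5 : ∑ p ∈ V, Gfun v (-p.1 - p.2, p.1) = ∑ p ∈ V, Gfun v p := by
    apply Finset.sum_nbij' (i := fun p => (-p.1 - p.2, p.1)) (j := fun p => (p.2, -p.1 - p.2))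
    · intro p hp
      rw [hmemV] at hp
      rw [hmemV]
      dsimp only
      exact ⟨hp.2.2, hp.1, by rw [hb1]; exact hp.2.1⟩
    · intro p hp
      rw [hmemV] at hp
      rw [hmemV]
      dsimp only
      exact ⟨hp.2.1, hp.2.2, by rw [hb4 p]; exact hp.1⟩
    · intro p _
      apply Prod.ext
      · rfl
      · simp only []
        abel
    · intro p _
      apply Prod.ext
      · simp only []
        abel
      · rfl
    · intro p _; rfl
  have h6 : ∑ p ∈ V, (Gfun v p + Gfun v (p.2, p.1) + Gfun v (p.1, -p.1 - p.2)
      + Gfun v (-p.1 - p.2, p.1) + Gfun v (p.2, -p.1 - p.2) + Gfun v (-p.1 - p.2, p.2)) = 0 := by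
    apply Finset.sum_eq_zero
    intro p hp
    rw [hmemV] at hp
    obtain ⟨h1, h2, h3⟩ := hp
    have ha : p.1 ≠ 0 := (mem_Sset.mp (hS ▸ h1)).1
    have hb : p.2 ≠ 0 := (mem_Sset.mp (hS ▸ h2)).1
    have hc : -p.1 - p.2 ≠ 0 := (mem_Sset.mp (hS ▸ h3)).1
    have hsum : p.1 + p.2 + (-p.1 - p.2) = 0 := by abel
    have := six_sum v hdv p.1 p.2 (-p.1 - p.2) hsum ha hb hc
    calc Gfun v p + Gfun v (p.2, p.1) + Gfun v (p.1, -p.1 - p.2)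
          + Gfun v (-p.1 - p.2, p.1) + Gfun v (p.2, -p.1 - p.2) + Gfun v (-p.1 - p.2, p.2)
        = Gfun v (p.1, p.2) + Gfun v (p.2, p.1) + Gfun v (p.1, -p.1 - p.2)
          + Gfun v (-p.1 - p.2, p.1) + Gfun v (p.2, -p.1 - p.2) + Gfun v (-p.1 - p.2, p.2) := by
          rw [Prod.mk.eta]
      _ = 0 := by linear_combination this
  have h6' : ∑ p ∈ V, (Gfun v p + Gfun v (p.2, p.1) + Gfun v (p.1, -p.1 - p.2)
      + Gfun v (-p.1 - p.2, p.1) + Gfun v (p.2, -p.1 - p.2) + Gfun v (-p.1 - p.2, p.2))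
      = 6 * ∑ p ∈ V, Gfun v p := by
    simp only [Finset.sum_add_distrib]
    rw [hs1, hs2, hs3, hs4, hs5]
    ring
  have h7 : (6 : ℂ) * ∑ p ∈ V, Gfun v p = 0 := by rw [← h6', h6]
  have h8 : (6 : ℂ) ≠ 0 := by norm_num
  exact (mul_eq_zero.mp h7).resolve_left h8

end NSAux
namespace NSAux

lemma re_ofReal_mul' (r : ℝ) (z : ℂ) : ((r : ℂ) * z).re = r * z.re := by
  simp [Complex.mul_re]

lemma enstrophy_eq {n : ℝ} (g : (Fin 2 → ℤ) → EuclideanSpace ℂ (Fin 2))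
    (hg : ∀ k, k ∉ Sset n → g k = 0) :
    enstrophy g = ∑ k ∈ Sset n, qsum k * ‖g k‖^2 := by
  rw [enstrophy, tsum_eq_sum (s := Sset n) (fun b hb => by rw [hg b hb]; simp)]
  exact Finset.sum_congr rfl fun k _ => by rw [znorm_sq]

lemma Nsum_eq {n : ℝ} (v : (Fin 2 → ℤ) → EuclideanSpace ℂ (Fin 2))
    (hsupp : ∀ k, k ∉ Sset n → v k = 0) (k : Fin 2 → ℤ) :
    (∑' k1, Nterm v k k1) = ∑ k1 ∈ Sset n, Nterm v k k1 := by
  apply tsum_eq_sum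
  intro b hb
  by_cases hb0 : b = 0
  · simp [Nterm, hb0]
  · simp [Nterm, hb0, hsupp b hb, dotZ]

lemma sum_mul_le_sqrt_mul_sqrt (s : Finset (Fin 2 → ℤ)) (F G : (Fin 2 → ℤ) → ℝ) :
    ∑ k ∈ s, F k * G k ≤ Real.sqrt (∑ k ∈ s, F k ^ 2) * Real.sqrt (∑ k ∈ s, G k ^ 2) := by
  have h := Finset.sum_mul_sq_le_sq_mul_sq s F G
  have h2 : Real.sqrt ((∑ k ∈ s, F k * G k) ^ 2)
      ≤ Real.sqrt ((∑ k ∈ s, F k ^ 2) * ∑ k ∈ s, G k ^ 2) := Real.sqrt_le_sqrt h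
  rw [Real.sqrt_sq_eq_abs, Real.sqrt_mul (Finset.sum_nonneg fun k _ => sq_nonneg _)] at h2
  exact le_trans (le_abs_self _) h2

end NSAux

open NSAux in
theorem enstrophy_derivative_inequality_2d' (ν : ℝ) (hν : 0 < ν) (n : ℝ) (hn : 1 ≤ n)
    (f : ℝ → (Fin 2 → ℤ) → EuclideanSpace ℂ (Fin 2))
    (hf0 : ∀ t, f t 0 = 0) (hfsupp : ∀ t k, n < znorm k → f t k = 0)
    (hfc : ∀ k, Continuous fun t => f t k)
    (u : ℝ → (Fin 2 → ℤ) → EuclideanSpace ℂ (Fin 2))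
    (hu : IsGalerkinSol ν n f u)
    (hreal : ∀ t, realSeq (u t)) (hdiv : ∀ t, divFree (u t)) :
    ∀ t : ℝ, ∃ dV : ℝ, HasDerivAt (fun s => enstrophy (u s)) dV t ∧
      dV ≤ -2 * ν * enstrophy (u t)
            + 2 * Real.sqrt (enstrophy (f t)) * Real.sqrt (enstrophy (u t)) := by
  intro t
  classical
  obtain ⟨hu0, husupp, huode⟩ := hu
  set S := Sset n with hS
  have hsuppu : ∀ s : ℝ, ∀ k, k ∉ S → u s k = 0 := by
    intro s k hk
    rw [hS, mem_Sset] at hk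
    push_neg at hk
    by_cases hk0 : k = 0
    · rw [hk0]; exact hu0 s
    · exact husupp s k (hk hk0)
  have hsuppf : ∀ k, k ∉ S → f t k = 0 := by
    intro k hk
    rw [hS, mem_Sset] at hk
    push_neg at hk
    by_cases hk0 : k = 0
    · rw [hk0]; exact hf0 t
    · exact hfsupp t k (hk hk0)
  set R : (Fin 2 → ℤ) → EuclideanSpace ℂ (Fin 2) := fun k => GalerkinRHS ν (f t k) (u t) k
    with hR
  set D : ℝ := ∑ k ∈ S, qsum k * (2 * (inner ℂ (R k) (u t k) : ℂ).re) with hD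
  -- derivative of each mode's enstrophy
  have hder : ∀ k ∈ S, HasDerivAt (fun s => qsum k * ‖u s k‖^2)
      (qsum k * (2 * (inner ℂ (R k) (u t k) : ℂ).re)) t := by
    intro k hk
    obtain ⟨hk0, hkn⟩ := mem_Sset.mp (hS ▸ hk)
    have h := huode t k hk0 hkn
    have h2 : HasDerivAt (fun s => (inner ℂ (u s k) (u s k) : ℂ))
        (inner ℂ (u t k) (R k) + inner ℂ (R k) (u t k)) t := HasDerivAt.inner ℂ h h
    have h3 := (Complex.reCLM.hasFDerivAt).comp_hasDerivAt t h2
    have h4 : HasDerivAt (fun s => ‖u s k‖^2) (2 * (inner ℂ (R k) (u t k) : ℂ).re) t := by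
      convert h3 using 1
      · rfl
      · rfl
      · funext s
        simp only [Function.comp_apply, Complex.reCLM_apply]
        rw [← inner_self_eq_norm_sq (𝕜 := ℂ), RCLike.re_to_complex]
      · simp only [Complex.reCLM_apply, Complex.add_re]
        have : (inner ℂ (u t k) (R k) : ℂ) = (starRingEnd ℂ) (inner ℂ (R k) (u t k) : ℂ) :=
          (inner_conj_symm _ _).symm
        rw [this, Complex.conj_re]
        ring_nf
    exact h4.const_mul (qsum k)
  have hfun : (fun s => enstrophy (u s)) = fun s => ∑ k ∈ S, qsum k * ‖u s k‖^2 :=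
    funext fun s => enstrophy_eq (u s) (hsuppu s)
  have hVder : HasDerivAt (fun s => enstrophy (u s)) D t := by
    rw [hfun, hD]
    exact HasDerivAt.fun_sum hder
  refine ⟨D, hVder, ?_⟩
  -- decompose the RHS inner product
  have hRdecomp : ∀ k ∈ S, (inner ℂ (R k) (u t k) : ℂ).re
      = (inner ℂ (∑ k1 ∈ S, Nterm (u t) k k1) (u t k) : ℂ).re
        - ν * qsum k * ‖u t k‖^2 + (inner ℂ (f t k) (u t k) : ℂ).re := by
    intro k hk
    rw [hR]
    simp only [GalerkinRHS]
    rw [Nsum_eq (u t) (hsuppu t) k]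
    rw [inner_add_left, inner_sub_left, inner_smul_left, proj_inner k (f t k) (u t k) (hdiv t k)]
    rw [Complex.conj_ofReal]
    rw [Complex.add_re, Complex.sub_re, re_ofReal_mul']
    have h5 : (inner ℂ (u t k) (u t k) : ℂ).re = ‖u t k‖^2 := by
      rw [← inner_self_eq_norm_sq (𝕜 := ℂ), RCLike.re_to_complex]
    rw [h5, znorm_sq]
    try ring
  -- nonlinear term contributes zero
  have hNLre : ∑ k ∈ S, qsum k * (inner ℂ (∑ k1 ∈ S, Nterm (u t) k k1) (u t k) : ℂ).re = 0 := by
    have h0 := NL_zero n (u t) (hsuppu t) (hreal t) (hdiv t)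
    have h1 : ∑ k ∈ S, qsum k * (inner ℂ (∑ k1 ∈ S, Nterm (u t) k k1) (u t k) : ℂ).re
        = (∑ k ∈ S, ((qsum k : ℝ) : ℂ) * (inner ℂ (∑ k1 ∈ S, Nterm (u t) k k1) (u t k) : ℂ)).re := by
      rw [Complex.re_sum]
      exact Finset.sum_congr rfl fun k _ => (re_ofReal_mul' _ _).symm
    rw [h1]
    have h2 : ∑ k ∈ S, ((qsum k : ℝ) : ℂ) * (inner ℂ (∑ k1 ∈ S, Nterm (u t) k k1) (u t k) : ℂ)
        = ∑ k ∈ S, ∑ k1 ∈ S, ((qsum k : ℝ) : ℂ) * (inner ℂ (Nterm (u t) k k1) (u t k) : ℂ) := by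
      apply Finset.sum_congr rfl
      intro k _
      rw [sum_inner, Finset.mul_sum]
    rw [h2, h0]
    simp
  -- value of D
  have hDval : D = -2 * ν * (∑ k ∈ S, qsum k ^ 2 * ‖u t k‖^2)
      + 2 * (∑ k ∈ S, qsum k * (inner ℂ (f t k) (u t k) : ℂ).re) := by
    rw [hD]
    have : ∑ k ∈ S, qsum k * (2 * (inner ℂ (R k) (u t k) : ℂ).re)
        = ∑ k ∈ S, (2 * (qsum k * (inner ℂ (∑ k1 ∈ S, Nterm (u t) k k1) (u t k) : ℂ).re)
          + (-2 * ν) * (qsum k ^ 2 * ‖u t k‖^2)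
          + 2 * (qsum k * (inner ℂ (f t k) (u t k) : ℂ).re)) := by
      apply Finset.sum_congr rfl
      intro k hk
      rw [hRdecomp k hk]
      ring
    rw [this, Finset.sum_add_distrib, Finset.sum_add_distrib, ← Finset.mul_sum, ← Finset.mul_sum,
      ← Finset.mul_sum, hNLre]
    ring
  -- forcing bound
  have hVu : enstrophy (u t) = ∑ k ∈ S, qsum k * ‖u t k‖^2 := enstrophy_eq (u t) (hsuppu t)
  have hVf : enstrophy (f t) = ∑ k ∈ S, qsum k * ‖f t k‖^2 := enstrophy_eq (f t) hsuppf
  have hF : ∑ k ∈ S, qsum k * (inner ℂ (f t k) (u t k) : ℂ).re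
      ≤ Real.sqrt (enstrophy (f t)) * Real.sqrt (enstrophy (u t)) := by
    have h1 : ∑ k ∈ S, qsum k * (inner ℂ (f t k) (u t k) : ℂ).re
        ≤ ∑ k ∈ S, (znorm k * ‖f t k‖) * (znorm k * ‖u t k‖) := by
      apply Finset.sum_le_sum
      intro k _
      have h2 : (inner ℂ (f t k) (u t k) : ℂ).re ≤ ‖f t k‖ * ‖u t k‖ := by
        have := re_inner_le_norm (𝕜 := ℂ) (f t k) (u t k)
        rwa [RCLike.re_to_complex] at this
      have h3 : 0 ≤ qsum k := by rw [← znorm_sq]; positivity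
      calc qsum k * (inner ℂ (f t k) (u t k) : ℂ).re ≤ qsum k * (‖f t k‖ * ‖u t k‖) :=
            mul_le_mul_of_nonneg_left h2 h3
        _ = (znorm k * ‖f t k‖) * (znorm k * ‖u t k‖) := by rw [← znorm_sq]; ring
    have h4 := sum_mul_le_sqrt_mul_sqrt S (fun k => znorm k * ‖f t k‖) (fun k => znorm k * ‖u t k‖)
    have h5 : ∑ k ∈ S, (znorm k * ‖f t k‖)^2 = enstrophy (f t) := by
      rw [hVf]
      exact Finset.sum_congr rfl fun k _ => by rw [mul_pow, znorm_sq]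
    have h6 : ∑ k ∈ S, (znorm k * ‖u t k‖)^2 = enstrophy (u t) := by
      rw [hVu]
      exact Finset.sum_congr rfl fun k _ => by rw [mul_pow, znorm_sq]
    rw [h5, h6] at h4
    exact le_trans h1 h4
  -- dissipation bound
  have hDis : ∑ k ∈ S, qsum k * ‖u t k‖^2 ≤ ∑ k ∈ S, qsum k ^ 2 * ‖u t k‖^2 := by
    apply Finset.sum_le_sum
    intro k hk
    have h1 := one_le_qsum (mem_Sset.mp (hS ▸ hk)).1
    nlinarith [sq_nonneg ‖u t k‖,
      mul_nonneg (mul_nonneg (by linarith : (0:ℝ) ≤ qsum k - 1)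
        (by linarith : (0:ℝ) ≤ qsum k)) (sq_nonneg ‖u t k‖)]
  rw [hDval]
  have h7 : 2 * ν * (∑ k ∈ S, qsum k * ‖u t k‖^2) ≤ 2 * ν * (∑ k ∈ S, qsum k ^ 2 * ‖u t k‖^2) :=
    mul_le_mul_of_nonneg_left hDis (by positivity)
  have h8 : 2 * ν * enstrophy (u t) ≤ 2 * ν * ∑ k ∈ S, qsum k ^ 2 * ‖u t k‖ ^ 2 := by
    rw [hVu]; exact h7
  linarith [hF]

/-- 2D enstrophy inequality: along any real divergence-free solution of a symmetric
Galerkin projection of the Navier–Stokes Fourier system,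
`d/dt V(u(t)) ≤ -2ν V(u(t)) + 2 √(V(f(t))) √(V(u(t)))`. -/
theorem enstrophy_derivative_inequality_2d (ν : ℝ) (hν : 0 < ν) (n : ℝ) (hn : 1 ≤ n)
    (f : ℝ → (Fin 2 → ℤ) → EuclideanSpace ℂ (Fin 2))
    (hf0 : ∀ t, f t 0 = 0) (hfsupp : ∀ t k, n < znorm k → f t k = 0)
    (hfc : ∀ k, Continuous fun t => f t k)
    (u : ℝ → (Fin 2 → ℤ) → EuclideanSpace ℂ (Fin 2))
    (hu : IsGalerkinSol ν n f u)
    (hreal : ∀ t, realSeq (u t)) (hdiv : ∀ t, divFree (u t)) :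
    ∀ t : ℝ, ∃ dV : ℝ, HasDerivAt (fun s => enstrophy (u s)) dV t ∧
      dV ≤ -2 * ν * enstrophy (u t)
            + 2 * Real.sqrt (enstrophy (f t)) * Real.sqrt (enstrophy (u t)) := by
  exact enstrophy_derivative_inequality_2d' ν hν n hn f hf0 hfsupp hfc u hu hreal hdiv
end
end

section
/- For every s > 3 there exists a constant C₂ > 0, depending only on s, such that for every C > 0 and every divergence-free Fourier coefficient sequence u : ℤ³ → ℂ³ with u_0 = 0 and |u_k| ≤ C/|k|^s for all k ≠ 0, the series defining N_k(u) converges absolutely and |N_k(u)| ≤ C₂ C² / |k|^{s−1} for every k ∈ ℤ³ \ {0}. -/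
noncomputable section

open scoped BigOperators

namespace NSaux

variable {d : ℕ}

def castR (k : Fin d → ℤ) : EuclideanSpace ℝ (Fin d) := WithLp.toLp 2 (fun i => (k i : ℝ))
def castC (k : Fin d → ℤ) : EuclideanSpace ℂ (Fin d) := WithLp.toLp 2 (fun i => (k i : ℂ))

lemma znorm_eq (k : Fin d → ℤ) : znorm k = ‖castR k‖ := by
  rw [EuclideanSpace.norm_eq, znorm]
  congr 1
  refine Finset.sum_congr rfl fun i _ => ?_
  rw [Real.norm_eq_abs, sq_abs]; rfl

lemma znorm_nonneg (k : Fin d → ℤ) : 0 ≤ znorm k := Real.sqrt_nonneg _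

lemma castR_eq_zero {k : Fin d → ℤ} (h : castR k = 0) : k = 0 := by
  funext i
  have := congrArg (fun x : EuclideanSpace ℝ (Fin d) => x i) h
  simpa [castR] using this

lemma znorm_pos {k : Fin d → ℤ} (hk : k ≠ 0) : 0 < znorm k := by
  rw [znorm_eq]
  refine norm_pos_iff.mpr fun h => hk (castR_eq_zero h)

lemma castR_add (a b : Fin d → ℤ) : castR (a + b) = castR a + castR b := by
  ext i
  simp [castR]

lemma znorm_triangle (k k1 : Fin d → ℤ) : znorm k ≤ znorm k1 + znorm (k - k1) := by
  have h : k = k1 + (k - k1) := by ring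
  rw [znorm_eq, znorm_eq, znorm_eq]
  calc ‖castR k‖ = ‖castR k1 + castR (k - k1)‖ := by rw [← castR_add, ← h]
    _ ≤ _ := norm_add_le _ _

lemma castC_norm (k : Fin d → ℤ) : ‖castC k‖ = znorm k := by
  rw [EuclideanSpace.norm_eq, znorm]
  congr 1
  refine Finset.sum_congr rfl fun i _ => ?_
  rw [show ‖castC k i‖ = |(k i : ℝ)| by simp [castC], sq_abs]

lemma dotZ_eq_inner (a : EuclideanSpace ℂ (Fin d)) (k : Fin d → ℤ) :
    dotZ a k = inner ℂ (castC k) a := by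
  rw [dotZ, PiLp.inner_apply]
  refine Finset.sum_congr rfl fun i _ => ?_
  simp [castC, RCLike.inner_apply, mul_comm]

lemma dotZ_norm_le (a : EuclideanSpace ℂ (Fin d)) (k : Fin d → ℤ) :
    ‖dotZ a k‖ ≤ znorm k * ‖a‖ := by
  rw [dotZ_eq_inner, ← castC_norm]
  exact norm_inner_le_norm _ _

lemma projP_eq (k : Fin d → ℤ) (v : EuclideanSpace ℂ (Fin d)) :
    projP k v = v - (dotZ v k / ((znorm k ^ 2 : ℝ) : ℂ)) • castC k := by
  ext j
  have : (znorm k : ℝ) ^ 2 = ∑ i, ((k i : ℝ))^2 :=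
    Real.sq_sqrt (Finset.sum_nonneg fun i _ => sq_nonneg _)
  rw [this]
  rfl

lemma projP_norm_le {k : Fin d → ℤ} (hk : k ≠ 0) (v : EuclideanSpace ℂ (Fin d)) :
    ‖projP k v‖ ≤ 2 * ‖v‖ := by
  have hz := znorm_pos hk
  rw [projP_eq]
  have h1 : ‖(dotZ v k / ((znorm k ^ 2 : ℝ) : ℂ)) • castC k‖ ≤ ‖v‖ := by
    rw [norm_smul, castC_norm]
    have : ‖dotZ v k / ((znorm k ^ 2 : ℝ) : ℂ)‖ ≤ ‖v‖ / znorm k := by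
      rw [norm_div]
      rw [show ‖((znorm k ^ 2 : ℝ) : ℂ)‖ = znorm k ^ 2 by
        rw [Complex.norm_real, Real.norm_eq_abs, abs_of_nonneg (by positivity)]]
      rw [div_le_div_iff₀ (by positivity) hz]
      have hcs := dotZ_norm_le v k
      nlinarith [hz.le, norm_nonneg v]
    calc ‖dotZ v k / ((znorm k ^ 2 : ℝ) : ℂ)‖ * znorm k ≤ (‖v‖ / znorm k) * znorm k := by
          gcongr
      _ = ‖v‖ := by field_simp
  calc ‖v - _‖ ≤ ‖v‖ + ‖(dotZ v k / ((znorm k ^ 2 : ℝ) : ℂ)) • castC k‖ := norm_sub_le _ _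
    _ ≤ ‖v‖ + ‖v‖ := by linarith
    _ = 2 * ‖v‖ := by ring

lemma summable_int_one_add {t : ℝ} (ht : 1 < t) :
    Summable fun c : ℤ => (1 + |(c : ℝ)|) ^ (-t) := by
  have hnat : Summable fun n : ℕ => ((n : ℝ)) ^ (-t) :=
    Real.summable_nat_rpow.mpr (by linarith)
  have hshift : Summable fun n : ℕ => (1 + (n : ℝ)) ^ (-t) := by
    have := (summable_nat_add_iff (f := fun n : ℕ => ((n : ℝ)) ^ (-t)) 1).mpr hnat
    refine this.congr fun n => ?_
    push_cast
    ring_nf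
  refine Summable.of_nat_of_neg ?_ ?_ <;>
    · refine hshift.congr fun n => ?_
      push_cast
      simp [abs_of_nonneg, Nat.cast_nonneg]

lemma summable_fin2_one_add {t : ℝ} (ht : 2 < t) :
    Summable fun y : Fin 2 → ℤ => (1 + ‖y‖) ^ (-t) := by
  have hbase := EisensteinSeries.summable_one_div_norm_rpow ht
  have hupd := hbase.update 0 1
  refine hupd.of_nonneg_of_le (fun y => by positivity) fun y => ?_
  by_cases hy : y = 0
  · subst hy; simp [Function.update_self]
  · rw [Function.update_of_ne hy]
    have h1 : (0 : ℝ) < ‖y‖ := by rwa [norm_pos_iff]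
    exact Real.rpow_le_rpow_of_nonpos h1 (by linarith) (by linarith)

def eqv3 : (Fin 3 → ℤ) ≃ (Fin 2 → ℤ) × ℤ where
  toFun m := (fun i => m i.castSucc, m 2)
  invFun p := Fin.snoc p.1 p.2
  left_inv m := by
    funext i
    refine Fin.lastCases ?_ (fun j => ?_) i
    · show m 2 = m (Fin.last 2)
      congr 1
    · simp [Fin.snoc_castSucc]
  right_inv p := by
    refine Prod.ext ?_ ?_
    · funext j; simp [Fin.snoc_castSucc]
    · simp [Fin.snoc]

lemma norm_int_ge_one {n : ℕ} {m : Fin n → ℤ} (hm : m ≠ 0) : 1 ≤ ‖m‖ := by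
  obtain ⟨i, hi⟩ : ∃ i, m i ≠ 0 := by
    by_contra h
    push_neg at h
    exact hm (funext h)
  calc (1 : ℝ) ≤ ‖m i‖ := by
        rw [Int.norm_eq_abs]
        exact_mod_cast Int.one_le_abs hi
    _ ≤ ‖m‖ := norm_le_pi_norm m i

lemma summable_fin3_one_add {s : ℝ} (hs : 3 < s) :
    Summable fun m : Fin 3 → ℤ => (1 + ‖m‖) ^ (-s) := by
  set t1 : ℝ := (s + 1) / 2 with ht1
  set t2 : ℝ := (s - 1) / 2 with ht2
  have h1 : (2 : ℝ) < t1 := by rw [ht1]; linarith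
  have h2 : (1 : ℝ) < t2 := by rw [ht2]; linarith
  have hprod := (summable_fin2_one_add h1).mul_of_nonneg (summable_int_one_add h2)
    (fun y => by positivity) (fun c => by positivity)
  have := (eqv3.summable_iff (f := fun p : (Fin 2 → ℤ) × ℤ =>
      (1 + ‖p.1‖) ^ (-t1) * (1 + |(p.2 : ℝ)|) ^ (-t2))).mpr hprod
  refine this.of_nonneg_of_le (fun m => by positivity) fun m => ?_
  have hm0 : (0:ℝ) ≤ ‖m‖ := norm_nonneg _
  have hy : ‖(fun i => m i.castSucc : Fin 2 → ℤ)‖ ≤ ‖m‖ := by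
    refine pi_norm_le_iff_of_nonneg hm0 |>.mpr fun i => norm_le_pi_norm m _
  have hc : |((m 2 : ℤ) : ℝ)| ≤ ‖m‖ := by
    have := norm_le_pi_norm m 2
    rwa [Int.norm_eq_abs] at this
  have key : (1 + ‖m‖) ^ (-s) = (1 + ‖m‖) ^ (-t1) * (1 + ‖m‖) ^ (-t2) := by
    rw [← Real.rpow_add (by linarith)]
    congr 1
    rw [ht1, ht2]; ring
  rw [key]
  show (1 + ‖m‖) ^ (-t1) * (1 + ‖m‖) ^ (-t2) ≤
    (1 + ‖(eqv3 m).1‖) ^ (-t1) * (1 + |((eqv3 m).2 : ℝ)|) ^ (-t2)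
  have e1 : (eqv3 m).1 = fun i => m i.castSucc := rfl
  have e2 : (eqv3 m).2 = m 2 := rfl
  rw [e1, e2]
  have b1 : (1 + ‖m‖) ^ (-t1) ≤ (1 + ‖(fun i => m i.castSucc : Fin 2 → ℤ)‖) ^ (-t1) :=
    Real.rpow_le_rpow_of_nonpos (by positivity) (by linarith) (by linarith)
  have b2 : (1 + ‖m‖) ^ (-t2) ≤ (1 + |((m 2 : ℤ) : ℝ)|) ^ (-t2) :=
    Real.rpow_le_rpow_of_nonpos (by positivity)
      (by linarith [abs_nonneg ((m 2 : ℤ) : ℝ)]) (by linarith)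
  exact mul_le_mul b1 b2 (by positivity) (by positivity)

lemma summable_fin3_norm {s : ℝ} (hs : 3 < s) :
    Summable fun m : Fin 3 → ℤ => ‖m‖ ^ (-s) := by
  have h := (summable_fin3_one_add hs).mul_left ((2:ℝ) ^ s)
  refine h.of_nonneg_of_le (fun m => by positivity) fun m => ?_
  by_cases hm : m = 0
  · subst hm
    rw [norm_zero, Real.zero_rpow (by linarith)]
    positivity
  · have h1 := norm_int_ge_one hm
    have h2 : 1 + ‖m‖ ≤ 2 * ‖m‖ := by linarith
    have h3 : (2 * ‖m‖) ^ (-s) ≤ (1 + ‖m‖) ^ (-s) :=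
      Real.rpow_le_rpow_of_nonpos (by linarith) h2 (by linarith)
    have h4 : (2 * ‖m‖) ^ (-s) = (2:ℝ)^(-s) * ‖m‖ ^ (-s) :=
      Real.mul_rpow (by norm_num) (by linarith)
    have h5 : (0:ℝ) < (2:ℝ) ^ s := by positivity
    rw [h4] at h3
    have h6 : (2:ℝ)^(-s) * ((2:ℝ)^s) = 1 := by
      rw [← Real.rpow_add (by norm_num)]; simp
    nlinarith [Real.rpow_nonneg (show (0:ℝ) ≤ ‖m‖ from norm_nonneg _) (-s)]

lemma pi_norm_le_znorm (m : Fin d → ℤ) : ‖m‖ ≤ znorm m := by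
  refine (pi_norm_le_iff_of_nonneg (znorm_nonneg m)).mpr fun i => ?_
  rw [Int.norm_eq_abs, ← Real.sqrt_sq_eq_abs]
  exact Real.sqrt_le_sqrt (Finset.single_le_sum (f := fun j => ((m j : ℝ))^2)
    (fun j _ => sq_nonneg _) (Finset.mem_univ i))

def fwt (s : ℝ) (m : Fin 3 → ℤ) : ℝ := if m = 0 then 0 else znorm m ^ (-s)

lemma fwt_nonneg (s : ℝ) (m : Fin 3 → ℤ) : 0 ≤ fwt s m := by
  unfold fwt; split
  · exact le_refl 0
  · exact Real.rpow_nonneg (znorm_nonneg m) _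

lemma summable_fwt {s : ℝ} (hs : 3 < s) : Summable (fwt s) := by
  refine (summable_fin3_norm hs).of_nonneg_of_le (fwt_nonneg s) fun m => ?_
  unfold fwt
  by_cases hm : m = 0
  · rw [if_pos hm]
    exact Real.rpow_nonneg (norm_nonneg _) _
  · rw [if_neg hm]
    exact Real.rpow_le_rpow_of_nonpos (norm_pos_iff.mpr hm)
      (pi_norm_le_znorm m) (by linarith)

lemma fwt_conv {s : ℝ} (hs : 0 < s) {k : Fin 3 → ℤ} (hk : k ≠ 0) (k1 : Fin 3 → ℤ) :
    fwt s k1 * fwt s (k - k1) ≤ 2 ^ s * znorm k ^ (-s) * (fwt s k1 + fwt s (k - k1)) := by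
  have hk' := znorm_pos hk
  have hX : (0:ℝ) ≤ 2 ^ s * znorm k ^ (-s) := by positivity
  by_cases h1 : k1 = 0
  · have e : fwt s k1 = 0 := by rw [fwt, if_pos h1]
    rw [e, zero_mul]
    exact mul_nonneg hX (add_nonneg le_rfl (fwt_nonneg s _))
  by_cases h2 : k - k1 = 0
  · have e : fwt s (k - k1) = 0 := by rw [fwt, if_pos h2]
    rw [e, mul_zero]
    exact mul_nonneg hX (add_nonneg (fwt_nonneg s _) le_rfl)
  have ha := znorm_pos h1
  have hb := znorm_pos h2
  have htri := znorm_triangle k k1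
  rw [fwt, if_neg h1, fwt, if_neg h2]
  have key : ∀ x : ℝ, 0 < x → znorm k ≤ 2 * x → x ^ (-s) ≤ 2 ^ s * znorm k ^ (-s) := by
    intro x hx h2x
    have h := Real.rpow_le_rpow_of_nonpos hk' h2x (neg_nonpos.mpr hs.le)
    rw [Real.mul_rpow (by norm_num) hx.le] at h
    have h2s : (0:ℝ) < (2:ℝ) ^ s := Real.rpow_pos_of_pos (by norm_num) s
    have := mul_le_mul_of_nonneg_left h h2s.le
    rw [← mul_assoc, ← Real.rpow_add (by norm_num : (0:ℝ) < 2)] at this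
    simpa using this
  have hA := Real.rpow_nonneg ha.le (-s)
  have hB := Real.rpow_nonneg hb.le (-s)
  rcases le_total (znorm k1) (znorm (k - k1)) with hab | hab
  · have hb' := key _ hb (by linarith)
    nlinarith
  · have ha' := key _ ha (by linarith)
    nlinarith

end NSaux

/-- 3D convolution estimate: for `s > 3` there is `C₂ = C₂(s) > 0` such that for every
`C > 0` and every divergence-free `u : ℤ³ → ℂ³` with `u_0 = 0` and `|u_k| ≤ C/|k|^s`
for `k ≠ 0`, the series defining `N_k(u)` converges absolutely and
`|N_k(u)| ≤ C₂ C² / |k|^{s-1}` for every `k ≠ 0`. -/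
theorem nonlinearity_convolution_estimate_3d (s : ℝ) (hs : 3 < s) :
    ∃ C₂ : ℝ, 0 < C₂ ∧ ∀ C : ℝ, 0 < C →
      ∀ u : (Fin 3 → ℤ) → EuclideanSpace ℂ (Fin 3),
        divFree u → u 0 = 0 →
        (∀ k : Fin 3 → ℤ, k ≠ 0 → ‖u k‖ ≤ C / znorm k ^ s) →
        ∀ k : Fin 3 → ℤ, k ≠ 0 →
          Summable (fun k1 => ‖Nterm u k k1‖) ∧
          ‖Nfun u k‖ ≤ C₂ * C^2 / znorm k ^ (s - 1) := by
  classical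
  have hs0 : (0:ℝ) < s := by linarith
  set S : ℝ := ∑' m : Fin 3 → ℤ, NSaux.fwt s m with hS
  have hfs : Summable (NSaux.fwt s) := NSaux.summable_fwt hs
  have hSnn : 0 ≤ S := tsum_nonneg fun m => NSaux.fwt_nonneg s m
  refine ⟨4 * 2 ^ s * (S + 1), by positivity, ?_⟩
  intro C hC u _hdiv hu0 hub k hk
  have hk' := NSaux.znorm_pos hk
  have hzn := NSaux.znorm_nonneg k
  have hub' : ∀ m, ‖u m‖ ≤ C * NSaux.fwt s m := by
    intro m
    by_cases hm : m = 0
    · simp [hm, hu0, NSaux.fwt]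
    · have h := hub m hm
      rw [NSaux.fwt, if_neg hm, Real.rpow_neg (NSaux.znorm_nonneg m), ← div_eq_mul_inv]
      exact h
  set D : ℝ := 2 * znorm k * C ^ 2 * (2 ^ s * znorm k ^ (-s)) with hD
  have hterm : ∀ k1, ‖Nterm u k k1‖ ≤
      2 * znorm k * C ^ 2 * (NSaux.fwt s k1 * NSaux.fwt s (k - k1)) := by
    intro k1
    have hf1 := NSaux.fwt_nonneg s k1
    have hf2 := NSaux.fwt_nonneg s (k - k1)
    by_cases h1 : k1 = 0
    · rw [Nterm, if_pos h1, norm_zero]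
      have : (0:ℝ) ≤ 2 * znorm k * C ^ 2 := by positivity
      exact mul_nonneg this (mul_nonneg hf1 hf2)
    · rw [Nterm, if_neg h1, norm_smul]
      have hdn : ‖-Complex.I * dotZ (u k1) k‖ = ‖dotZ (u k1) k‖ := by
        rw [norm_mul]; simp
      rw [hdn]
      calc ‖dotZ (u k1) k‖ * ‖projP k (u (k - k1))‖
          ≤ (znorm k * ‖u k1‖) * (2 * ‖u (k - k1)‖) :=
            mul_le_mul (NSaux.dotZ_norm_le _ _) (NSaux.projP_norm_le hk _)
              (norm_nonneg _) (mul_nonneg hzn (norm_nonneg _))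
        _ ≤ (znorm k * (C * NSaux.fwt s k1)) * (2 * (C * NSaux.fwt s (k - k1))) := by
            refine mul_le_mul (mul_le_mul_of_nonneg_left (hub' k1) hzn)
              (mul_le_mul_of_nonneg_left (hub' (k - k1)) (by norm_num))
              (by positivity) (mul_nonneg hzn (mul_nonneg hC.le hf1))
        _ = 2 * znorm k * C ^ 2 * (NSaux.fwt s k1 * NSaux.fwt s (k - k1)) := by ring
  have hdom : ∀ k1, ‖Nterm u k k1‖ ≤ D * (NSaux.fwt s k1 + NSaux.fwt s (k - k1)) := by
    intro k1
    calc ‖Nterm u k k1‖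
        ≤ 2 * znorm k * C ^ 2 * (NSaux.fwt s k1 * NSaux.fwt s (k - k1)) := hterm k1
      _ ≤ 2 * znorm k * C ^ 2 *
            (2 ^ s * znorm k ^ (-s) * (NSaux.fwt s k1 + NSaux.fwt s (k - k1))) :=
          mul_le_mul_of_nonneg_left (NSaux.fwt_conv hs0 hk k1) (by positivity)
      _ = D * (NSaux.fwt s k1 + NSaux.fwt s (k - k1)) := by rw [hD]; ring
  have hsub : Summable (fun k1 : Fin 3 → ℤ => NSaux.fwt s (k - k1)) := by
    have h := ((Equiv.subLeft k).summable_iff (f := NSaux.fwt s)).mpr hfs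
    exact h
  have hsum2 : Summable (fun k1 : Fin 3 → ℤ => NSaux.fwt s k1 + NSaux.fwt s (k - k1)) :=
    hfs.add hsub
  have hsumdom := hsum2.mul_left D
  have hNsum : Summable (fun k1 => ‖Nterm u k k1‖) :=
    Summable.of_nonneg_of_le (fun _ => norm_nonneg _) hdom hsumdom
  refine ⟨hNsum, ?_⟩
  have h1 : ‖Nfun u k‖ ≤ ∑' k1, ‖Nterm u k k1‖ := by
    rw [Nfun]
    exact norm_tsum_le_tsum_norm hNsum
  have h2 : ∑' k1, ‖Nterm u k k1‖ ≤
      ∑' k1 : Fin 3 → ℤ, D * (NSaux.fwt s k1 + NSaux.fwt s (k - k1)) :=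
    Summable.tsum_le_tsum hdom hNsum hsumdom
  have hre : ∑' k1 : Fin 3 → ℤ, NSaux.fwt s (k - k1) = S := by
    rw [hS]
    exact (Equiv.subLeft k).tsum_eq (NSaux.fwt s)
  have h3 : ∑' k1 : Fin 3 → ℤ, D * (NSaux.fwt s k1 + NSaux.fwt s (k - k1)) = D * (S + S) := by
    rw [tsum_mul_left, Summable.tsum_add hfs hsub, hre, ← hS]
  have eA : znorm k * znorm k ^ (-s) = znorm k ^ (1 - s) := by
    rw [show (1:ℝ) - s = 1 + (-s) by ring, Real.rpow_add hk', Real.rpow_one]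
  have eB : znorm k ^ (1 - s) = (znorm k ^ (s - 1))⁻¹ := by
    rw [show (1:ℝ) - s = -(s - 1) by ring, Real.rpow_neg (NSaux.znorm_nonneg k)]
  have hpow : (0:ℝ) ≤ (znorm k ^ (s - 1))⁻¹ := by positivity
  calc ‖Nfun u k‖ ≤ D * (S + S) := h1.trans (h2.trans_eq h3)
    _ = 4 * 2 ^ s * S * C ^ 2 * (znorm k * znorm k ^ (-s)) := by rw [hD]; ring
    _ = 4 * 2 ^ s * S * C ^ 2 * (znorm k ^ (s - 1))⁻¹ := by rw [eA, eB]
    _ ≤ 4 * 2 ^ s * (S + 1) * C ^ 2 * (znorm k ^ (s - 1))⁻¹ := by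
        have h2s : (0:ℝ) ≤ 2 ^ s := (Real.rpow_pos_of_pos (by norm_num) s).le
        have hmono : 4 * 2 ^ s * S * C ^ 2 ≤ 4 * 2 ^ s * (S + 1) * C ^ 2 := by
          nlinarith [sq_nonneg C]
        exact mul_le_mul_of_nonneg_right hmono hpow
    _ = 4 * 2 ^ s * (S + 1) * C ^ 2 / znorm k ^ (s - 1) := by rw [div_eq_mul_inv]
end
end

section
/- Let d = 3, ν > 0, s > 3 and let C₂ = C₂(s) be a constant such that |N_k(u)| ≤ C₂ C² / |k|^{s−1} for every C > 0, every divergence-free u ∈ Z(C,s) and every k ≠ 0. Let 0 < C < ν/C₂, let s_V ≥ s, A_V > 0, and let f_k : ℝ → ℂ³ (k ≠ 0) be a continuous forcing with |f_k(t)| ≤ A_V/|k|^{s_V} for all t and k ≠ 0. Then there exists K₀ such that for every n > K₀ and every m ≥ 1, the set of real divergence-free sequences in Z(C,s) is forward invariant for the symmetric Galerkin projection of order m of the Navier–Stokes Fourier system with forcing (I − P_n)f, i.e. with f_k replaced by 0 for all |k| ≤ n. -/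
noncomputable section

open scoped BigOperators RealInnerProductSpace ComplexConjugate

lemma one_le_znorm {d : ℕ} {k : Fin d → ℤ} (hk : k ≠ 0) : 1 ≤ znorm k := by
  obtain ⟨i, hi⟩ : ∃ i, k i ≠ 0 := by
    by_contra h; push_neg at h; exact hk (funext h)
  have h1 : (1:ℝ) ≤ (k i : ℝ)^2 := by
    have : (1:ℤ) ≤ (k i)^2 := by
      rcases lt_or_gt_of_ne hi with h | h <;> nlinarith
    exact_mod_cast this
  have h2 : (k i:ℝ)^2 ≤ ∑ j, ((k j:ℝ))^2 :=
    Finset.single_le_sum (f := fun j => ((k j:ℝ))^2) (fun j _ => sq_nonneg _) (Finset.mem_univ i)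
  calc (1:ℝ) = Real.sqrt 1 := (Real.sqrt_one).symm
    _ ≤ znorm k := Real.sqrt_le_sqrt (by linarith)

lemma rinner_eq {d : ℕ} (x y : EuclideanSpace ℂ (Fin d)) :
    ⟪x, y⟫ = (∑ j, conj (x j) * y j).re := by
  rw [Complex.re_sum]
  simp [PiLp.inner_apply, Complex.inner]
  exact Finset.sum_congr rfl fun _ _ => by ring

lemma real_inner_projP {d : ℕ} (k : Fin d → ℤ) (v w : EuclideanSpace ℂ (Fin d))
    (hw : dotZ w k = 0) : ⟪projP k v, w⟫ = ⟪v, w⟫ := by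
  rw [rinner_eq, rinner_eq]
  set c : ℂ := dotZ v k / ((∑ i, ((k i : ℝ))^2 : ℝ) : ℂ) with hc
  have h : ∑ j, conj ((projP k v) j) * w j
      = (∑ j, conj (v j) * w j) - conj c * (dotZ w k) := by
    rw [dotZ, Finset.mul_sum, ← Finset.sum_sub_distrib]
    refine Finset.sum_congr rfl fun j _ => ?_
    show conj (v j - c * (k j : ℂ)) * w j = _
    simp only [map_sub, map_mul, map_intCast]
    ring
  rw [h, hw, mul_zero, sub_zero]

lemma hasDerivAt_norm_sq_of_hasDerivAt {d : ℕ} {g : ℝ → EuclideanSpace ℂ (Fin d)}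
    {D : EuclideanSpace ℂ (Fin d)} {T : ℝ} (h : HasDerivAt g D T) :
    HasDerivAt (fun t => ‖g t‖ ^ 2) (2 * ⟪D, g T⟫) T := by
  have h2 := HasDerivAt.inner ℝ h h
  simp_rw [real_inner_self_eq_norm_sq] at h2
  have : ⟪g T, D⟫ + ⟪D, g T⟫ = 2 * ⟪D, g T⟫ := by
    rw [real_inner_comm (g T) D]; ring
  rwa [this] at h2

lemma eventually_lt_of_hasDerivAt_neg {φ : ℝ → ℝ} {L T : ℝ} (h : HasDerivAt φ L T)
    (hL : L < 0) : ∀ᶠ t in nhdsWithin T (Set.Ioi T), φ t < φ T := by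
  have hs := hasDerivAt_iff_tendsto_slope.mp h
  have h1 : ∀ᶠ t in nhdsWithin T {T}ᶜ, slope φ T t < 0 := hs.eventually_lt_const hL
  have h2 : ∀ᶠ t in nhdsWithin T (Set.Ioi T), slope φ T t < 0 :=
    h1.filter_mono (nhdsWithin_mono T (fun x hx => ne_of_gt hx))
  filter_upwards [h2, self_mem_nhdsWithin] with t ht hmem
  rw [slope_def_field] at ht
  have htT : (0:ℝ) < t - T := sub_pos.mpr hmem
  rcases div_neg_iff.mp ht with ⟨_, h⟩ | ⟨h, _⟩
  · linarith
  · linarith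

lemma finite_znorm_le (m : ℝ) : {k : Fin 3 → ℤ | znorm k ≤ m}.Finite := by
  refine Set.Finite.subset (Set.finite_Icc (fun _ => (-⌈m⌉ : ℤ)) (fun _ => ⌈m⌉)) ?_
  intro k hk
  simp only [Set.mem_setOf_eq] at hk
  rw [znorm] at hk
  have hm0 : 0 ≤ m := le_trans (Real.sqrt_nonneg _) hk
  have hnn : (0:ℝ) ≤ ∑ j, ((k j:ℝ))^2 := Finset.sum_nonneg fun j _ => sq_nonneg _
  have hS : ∑ j, ((k j:ℝ))^2 ≤ m^2 := by
    nlinarith [Real.sq_sqrt hnn, Real.sqrt_nonneg (∑ j, ((k j:ℝ))^2)]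
  have hki : ∀ i, ((k i:ℝ))^2 ≤ m^2 := fun i =>
    le_trans (Finset.single_le_sum (f := fun j => ((k j:ℝ))^2)
      (fun j _ => sq_nonneg _) (Finset.mem_univ i)) hS
  constructor <;> intro i
  · have h := (abs_le_of_sq_le_sq' (hki i) hm0).1
    have : ((-⌈m⌉ : ℤ) : ℝ) ≤ (k i : ℝ) := by
      push_cast
      calc (-(⌈m⌉:ℝ)) ≤ -m := by simpa using Int.le_ceil m
        _ ≤ (k i:ℝ) := h
    exact_mod_cast this
  · have h := (abs_le_of_sq_le_sq' (hki i) hm0).2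
    have : ((k i : ℝ)) ≤ ((⌈m⌉ : ℤ) : ℝ) := le_trans h (by exact_mod_cast Int.le_ceil m)
    exact_mod_cast this

lemma numeric_aux {v C x : ℝ} (hC : 0 < C) (hv : 0 < v) (hx1 : 1 ≤ x) :
    v * C * x ≤ v * C * x^2 := by
  have hx0 : (0:ℝ) < x := lt_of_lt_of_le one_pos hx1
  nlinarith [mul_nonneg (mul_pos hv hC).le (mul_nonneg hx0.le (sub_nonneg.mpr hx1))]

lemma numeric_case1 {v C C₂ x : ℝ} (hC : 0 < C) (hv : 0 < v) (hC₂C : C₂ * C < v)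
    (hx1 : 1 ≤ x) : C₂ * C^2 * x + 0 < v * C * x^2 := by
  have hx0 : (0:ℝ) < x := lt_of_lt_of_le one_pos hx1
  have h1 : C₂ * C * (C * x) < v * (C * x) := mul_lt_mul_of_pos_right hC₂C (mul_pos hC hx0)
  nlinarith [numeric_aux hC hv hx1, h1]

lemma numeric_case2 {v C C₂ A x : ℝ} (hC : 0 < C) (hv : 0 < v) (hC₂C : C₂ * C < v)
    (hx1 : 1 ≤ x) (hA2 : A < (v - C₂*C) * C * x) : C₂ * C^2 * x + A < v * C * x^2 := by
  have h3 : (v - C₂*C)*C*x = v*C*x - C₂*C^2*x := by ring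
  nlinarith [numeric_aux hC hv hx1]

/-- 3D trapping region with far-tail forcing: given `C₂ = C₂(s)` bounding the
nonlinearity on `Z(C,s)`, `0 < C < ν/C₂`, and a forcing with `|f_k(t)| ≤ A_V/|k|^{s_V}`
(`s_V ≥ s`), there exists `K₀` such that for every `n > K₀` and every order `m ≥ 1`,
the set of real divergence-free sequences in `Z(C,s)` is forward invariant for the
symmetric Galerkin projection of order `m` with forcing `(I - P_n) f`. -/
theorem trapping_region_3d_far_tail (ν s : ℝ) (hν : 0 < ν) (hs : 3 < s)
    (C₂ : ℝ) (hC₂ : 0 < C₂)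
    (hC₂N : ∀ C : ℝ, 0 < C →
      ∀ u : (Fin 3 → ℤ) → EuclideanSpace ℂ (Fin 3),
        divFree u → u 0 = 0 →
        (∀ k : Fin 3 → ℤ, k ≠ 0 → ‖u k‖ ≤ C / znorm k ^ s) →
        ∀ k : Fin 3 → ℤ, k ≠ 0 → ‖Nfun u k‖ ≤ C₂ * C^2 / znorm k ^ (s - 1))
    (C : ℝ) (hC : 0 < C) (hCν : C < ν / C₂)
    (sV A : ℝ) (hsV : s ≤ sV) (hA : 0 < A)
    (f : ℝ → (Fin 3 → ℤ) → EuclideanSpace ℂ (Fin 3))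
    (hf0 : ∀ t, f t 0 = 0) (hfc : ∀ k, Continuous fun t => f t k)
    (hfb : ∀ t (k : Fin 3 → ℤ), k ≠ 0 → ‖f t k‖ ≤ A / znorm k ^ sV) :
    ∃ K₀ : ℝ, ∀ n : ℝ, K₀ < n → ∀ m : ℝ, 1 ≤ m →
      ∀ u : ℝ → (Fin 3 → ℤ) → EuclideanSpace ℂ (Fin 3),
        IsGalerkinSol ν m (fun t k => if znorm k ≤ n then 0 else f t k) u →
        (∀ t, realSeq (u t)) → (∀ t, divFree (u t)) →
        ∀ t₀, (∀ k : Fin 3 → ℤ, k ≠ 0 → ‖u t₀ k‖ ≤ C / znorm k ^ s) →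
        ∀ t, t₀ ≤ t → ∀ k : Fin 3 → ℤ, k ≠ 0 → ‖u t k‖ ≤ C / znorm k ^ s := by
  have hC₂C : C₂ * C < ν := by
    have h := (lt_div_iff₀ hC₂).mp hCν
    nlinarith
  set ε := (ν - C₂ * C) * C with hεdef
  have hεpos : 0 < ε := mul_pos (by linarith) hC
  refine ⟨max (A / ε) 1, ?_⟩
  intro n hn m hm u hsol hreal hdiv t₀ hinit t₁ ht₁
  obtain ⟨hu0, hubig, hderiv⟩ := hsol
  have hcont : ∀ k : Fin 3 → ℤ, Continuous fun t => u t k := by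
    intro k
    by_cases hk0 : k = 0
    · subst hk0; exact continuous_const.congr fun t => (hu0 t).symm
    by_cases hkm : znorm k ≤ m
    · exact continuous_iff_continuousAt.mpr fun t => (hderiv t k hk0 hkm).continuousAt
    · exact continuous_const.congr fun t => (hubig t k (lt_of_not_ge hkm)).symm
  set S : Set ℝ := {t | t ∈ Set.Icc t₀ t₁ ∧
    ∀ k : Fin 3 → ℤ, k ≠ 0 → ‖u t k‖ ≤ C / znorm k ^ s} with hSdef
  have hSclosed : IsClosed S := by
    have hrw : S = Set.Icc t₀ t₁ ∩ ⋂ (k : Fin 3 → ℤ), ⋂ (_ : k ≠ 0),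
        {t | ‖u t k‖ ≤ C / znorm k ^ s} := by
      ext t; simp [hSdef, Set.mem_iInter]
    rw [hrw]
    exact isClosed_Icc.inter (isClosed_iInter fun k => isClosed_iInter fun _ =>
      isClosed_le ((hcont k).norm) continuous_const)
  have ht₀S : t₀ ∈ S := ⟨⟨le_refl t₀, ht₁⟩, hinit⟩
  have hbdd : BddAbove S := ⟨t₁, fun x hx => hx.1.2⟩
  set T := sSup S with hTdef
  have hTS : T ∈ S := hSclosed.csSup_mem ⟨t₀, ht₀S⟩ hbdd
  rcases eq_or_lt_of_le hTS.1.2 with hTeq | hTlt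
  · exact fun k hk => hTeq ▸ hTS.2 k hk
  exfalso
  have hbT := hTS.2
  have hNb : ∀ k : Fin 3 → ℤ, k ≠ 0 → ‖Nfun (u T) k‖ ≤ C₂ * C^2 / znorm k ^ (s-1) :=
    hC₂N C hC (u T) (hdiv T) (hu0 T) hbT
  have hev : ∀ k : Fin 3 → ℤ, k ≠ 0 → znorm k ≤ m →
      ∀ᶠ t in nhdsWithin T (Set.Ioi T), ‖u t k‖ ≤ C / znorm k ^ s := by
    intro k hk hkm
    have hx1 : (1:ℝ) ≤ znorm k := one_le_znorm hk
    have hx0 : (0:ℝ) < znorm k := lt_of_lt_of_le one_pos hx1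
    have hX : (0:ℝ) < znorm k ^ s := Real.rpow_pos_of_pos hx0 s
    have hRk : 0 < C / znorm k ^ s := div_pos hC hX
    rcases lt_or_eq_of_le (hbT k hk) with hlt | heq
    · have h1 : ∀ᶠ t in nhds T, ‖u t k‖ < C / znorm k ^ s :=
        (Continuous.tendsto ((hcont k).norm) T).eventually_lt_const hlt
      exact (h1.filter_mono nhdsWithin_le_nhds).mono fun t ht => ht.le
    · have hD : HasDerivAt (fun s => u s k)
          (GalerkinRHS ν (if znorm k ≤ n then 0 else f T k) (u T) k) T := hderiv T k hk hkm
      set D := GalerkinRHS ν (if znorm k ≤ n then 0 else f T k) (u T) k with hDdef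
      have hφ := hasDerivAt_norm_sq_of_hasDerivAt hD
      set Fb : ℝ := if znorm k ≤ n then 0 else A / znorm k ^ sV with hFbdef
      have hdf : dotZ (u T k) k = 0 := hdiv T k
      have hproj : ⟪projP k (if znorm k ≤ n then 0 else f T k), u T k⟫
          = ⟪(if znorm k ≤ n then (0 : EuclideanSpace ℂ (Fin 3)) else f T k), u T k⟫ :=
        real_inner_projP k _ _ hdf
      have hsmul : ⟪((ν * (znorm k)^2 : ℝ) : ℂ) • u T k, u T k⟫
          = (ν * (znorm k)^2) * ‖u T k‖^2 := by
        rw [Complex.coe_smul, real_inner_smul_left, real_inner_self_eq_norm_sq]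
      have hsplit : ⟪D, u T k⟫ = ⟪Nfun (u T) k, u T k⟫ - (ν * (znorm k)^2) * ‖u T k‖^2
          + ⟪(if znorm k ≤ n then (0 : EuclideanSpace ℂ (Fin 3)) else f T k), u T k⟫ := by
        rw [hDdef]
        show ⟪(∑' k1, Nterm (u T) k k1) - ((ν * (znorm k)^2 : ℝ) : ℂ) • u T k
            + projP k (if znorm k ≤ n then 0 else f T k), u T k⟫ = _
        rw [inner_add_left, inner_sub_left, hsmul, hproj]
        rfl
      have h1 : ⟪Nfun (u T) k, u T k⟫ ≤ (C₂ * C^2 / znorm k ^ (s-1)) * (C / znorm k ^ s) := by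
        calc ⟪Nfun (u T) k, u T k⟫ ≤ ‖Nfun (u T) k‖ * ‖u T k‖ := real_inner_le_norm _ _
          _ ≤ _ := by rw [heq]; exact mul_le_mul_of_nonneg_right (hNb k hk) hRk.le
      have h3 : ⟪(if znorm k ≤ n then (0 : EuclideanSpace ℂ (Fin 3)) else f T k), u T k⟫
          ≤ Fb * (C / znorm k ^ s) := by
        calc _ ≤ ‖(if znorm k ≤ n then (0 : EuclideanSpace ℂ (Fin 3)) else f T k)‖ * ‖u T k‖ :=
              real_inner_le_norm _ _
          _ ≤ Fb * (C / znorm k ^ s) := by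
              rw [heq]
              refine mul_le_mul_of_nonneg_right ?_ hRk.le
              rw [hFbdef]
              split_ifs with h
              · simp
              · exact hfb T k hk
      have hnum : C₂ * C^2 / znorm k ^ (s-1) + Fb - ν * (znorm k)^2 * (C / znorm k ^ s) < 0 := by
        have hxs1 : znorm k ^ (s-1) = znorm k ^ s / znorm k := by
          rw [Real.rpow_sub hx0, Real.rpow_one]
        have e1 : C₂ * C^2 / znorm k ^ (s-1) = C₂ * C^2 * znorm k / znorm k ^ s := by
          rw [hxs1, div_div_eq_mul_div]
        have e2 : ν * (znorm k)^2 * (C / znorm k ^ s) = ν * C * (znorm k)^2 / znorm k ^ s := by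
          ring
        have hFb : Fb ≤ (if znorm k ≤ n then (0:ℝ) else A) / znorm k ^ s := by
          rw [hFbdef]
          split_ifs with h
          · simp
          · exact div_le_div_of_nonneg_left hA.le hX
              (Real.rpow_le_rpow_of_exponent_le hx1 hsV)
        have hxx : znorm k ≤ (znorm k)^2 := by nlinarith
        have hnum2 : C₂ * C^2 * znorm k + (if znorm k ≤ n then (0:ℝ) else A)
            < ν * C * (znorm k)^2 := by
          split_ifs with h
          · exact numeric_case1 hC hν hC₂C hx1
          · have hnx : n < znorm k := lt_of_not_ge h
            have hKn : A / ε < n := lt_of_le_of_lt (le_max_left _ _) hn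
            have hA2 : A < ε * znorm k := by
              have hlt2 : A / ε < znorm k := lt_trans hKn hnx
              calc A = ε * (A / ε) := by field_simp
                _ < ε * znorm k := (mul_lt_mul_iff_right₀ hεpos).mpr hlt2
            rw [hεdef] at hA2
            exact numeric_case2 hC hν hC₂C hx1 (by linarith only [hA2])
        rw [e1, e2]
        have hcomb : C₂ * C^2 * znorm k / znorm k ^ s
            + (if znorm k ≤ n then (0:ℝ) else A) / znorm k ^ s
            - ν * C * (znorm k)^2 / znorm k ^ s < 0 := by
          rw [← add_div, div_sub_div_same]
          exact div_neg_of_neg_of_pos (by linarith only [hnum2]) hX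
        linarith only [hFb, hcomb]
      have hinner : ⟪D, u T k⟫ ≤ (C / znorm k ^ s) *
          (C₂ * C^2 / znorm k ^ (s-1) + Fb - ν * (znorm k)^2 * (C / znorm k ^ s)) := by
        rw [hsplit, heq]
        have e : (C / znorm k ^ s) * (C₂ * C^2 / znorm k ^ (s-1) + Fb
              - ν * (znorm k)^2 * (C / znorm k ^ s))
            = (C₂ * C^2 / znorm k ^ (s-1)) * (C / znorm k ^ s) + Fb * (C / znorm k ^ s)
              - ν * (znorm k)^2 * ((C / znorm k ^ s) * (C / znorm k ^ s)) := by ring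
        have e2 : (C / znorm k ^ s)^2 = (C / znorm k ^ s) * (C / znorm k ^ s) := sq _
        rw [e, e2]
        linarith only [h1, h3]
      have hL : 2 * ⟪D, u T k⟫ < 0 := by
        have hneg := mul_neg_of_pos_of_neg hRk hnum
        linarith only [hinner, hneg]
      have hevlt := eventually_lt_of_hasDerivAt_neg hφ hL
      refine hevlt.mono fun t ht => ?_
      rw [heq] at ht
      exact (lt_of_pow_lt_pow_left₀ 2 hRk.le ht).le
  have hevAll : ∀ᶠ t in nhdsWithin T (Set.Ioi T),
      ∀ k : Fin 3 → ℤ, k ≠ 0 → ‖u t k‖ ≤ C / znorm k ^ s := by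
    have hfin : {k : Fin 3 → ℤ | k ≠ 0 ∧ znorm k ≤ m}.Finite :=
      (finite_znorm_le m).subset fun k hk => hk.2
    have h1 : ∀ᶠ t in nhdsWithin T (Set.Ioi T),
        ∀ k ∈ {k : Fin 3 → ℤ | k ≠ 0 ∧ znorm k ≤ m}, ‖u t k‖ ≤ C / znorm k ^ s :=
      (Filter.eventually_all_finite hfin).mpr fun k hk => hev k hk.1 hk.2
    refine h1.mono fun t ht k hk => ?_
    by_cases hkm : znorm k ≤ m
    · exact ht k ⟨hk, hkm⟩
    · rw [hubig t k (lt_of_not_ge hkm), norm_zero]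
      have hx0 : (0:ℝ) < znorm k := lt_of_lt_of_le one_pos (one_le_znorm hk)
      positivity
  have hIoo : ∀ᶠ x in nhdsWithin T (Set.Ioi T), x ∈ Set.Ioo T t₁ :=
    Ioo_mem_nhdsGT_of_mem ⟨le_refl T, hTlt⟩
  obtain ⟨t', ht'1, ht'2⟩ := (hevAll.and hIoo).exists
  have ht'S : t' ∈ S := ⟨⟨le_trans hTS.1.1 ht'2.1.le, ht'2.2.le⟩, ht'1⟩
  exact absurd (le_csSup hbdd ht'S) (not_le.mpr ht'2.1)
end
end
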